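/- arXiv:1610.02212 — 6 statements merged into one kernel-verified Lean document; each statement's English description precedes it below -/
import Mathlib

section
/- If n ≥ 4 is even and 2 ≤ 2t < n, then the double generalized Petersen graph DP(n, t) has a Hamilton cycle. -/
inductive DPVert (n : ℕ) : Type
  | x : ZMod n → DPVert n
  | u : ZMod n → DPVert n
  | v : ZMod n → DPVert n
  | y : ZMod n → DPVert n
  deriving DecidableEq

def DP (n t : ℕ) : SimpleGraph (DPVert n) :=
  SimpleGraph.fromRel (fun a b =>
    (∃ i, a = DPVert.x i ∧ b = DPVert.x (i + 1)) ∨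
    (∃ i, a = DPVert.y i ∧ b = DPVert.y (i + 1)) ∨
    (∃ i, a = DPVert.x i ∧ b = DPVert.u i) ∨
    (∃ i, a = DPVert.y i ∧ b = DPVert.v i) ∨
    (∃ i, a = DPVert.u i ∧ b = DPVert.v (i + (t : ZMod n))) ∨
    (∃ i, a = DPVert.v i ∧ b = DPVert.u (i + (t : ZMod n))))

namespace DPHam

open SimpleGraph

section Generic
variable {V : Type*} {G : SimpleGraph V}

lemma endpoint_edge {b c : V} (p : G.Walk b c) (hp : p.IsPath) (he : s(c, b) ∈ p.edges) :
    p.length = 1 := by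
  cases p with
  | nil => simp at he
  | @cons _ b' _ h q =>
    rw [Walk.edges_cons, List.mem_cons] at he
    rw [Walk.cons_isPath_iff] at hp
    rcases he with he | he
    · rw [Sym2.eq_iff] at he
      rcases he with ⟨rfl, rfl⟩ | ⟨rfl, -⟩
      · exact absurd q.end_mem_support hp.2
      · rw [(Walk.isPath_iff_eq_nil (p := q)).mp hp.1]
        rfl
    · exact absurd (q.snd_mem_support_of_mem_edges he) hp.2

lemma isCycle_of_tail_nodup {a : V} (w : G.Walk a a) (h3 : 3 ≤ w.length)
    (hnd : w.support.tail.Nodup) : w.IsCycle := by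
  have hnil : ¬ w.Nil := by rw [Walk.nil_iff_length_eq]; omega
  have hps : w.tail.support = w.support.tail := Walk.support_tail_of_not_nil w hnil
  have hpath : w.tail.IsPath := by rw [Walk.isPath_def, hps]; exact hnd
  rw [← w.cons_tail_eq hnil, Walk.cons_isCycle_iff]
  refine ⟨hpath, fun hmem => ?_⟩
  have h1 := endpoint_edge _ hpath hmem
  have h2 := Walk.length_tail_add_one hnil
  omega

end Generic

variable {n t : ℕ}

/-! ### Adjacency lemmas -/

lemma adj1 (i : ZMod n) : (DP n t).Adj (.x i) (.u i) := by
  rw [DP, SimpleGraph.fromRel_adj]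
  exact ⟨by simp, Or.inl (Or.inr (Or.inr (Or.inl ⟨i, rfl, rfl⟩)))⟩

lemma adj2 (i : ZMod n) : (DP n t).Adj (.u i) (.v (i + t)) := by
  rw [DP, SimpleGraph.fromRel_adj]
  exact ⟨by simp, Or.inl (Or.inr (Or.inr (Or.inr (Or.inr (Or.inl ⟨i, rfl, rfl⟩)))))⟩

lemma adj3 (i : ZMod n) : (DP n t).Adj (.v (i + t)) (.y (i + t)) := by
  rw [DP, SimpleGraph.fromRel_adj]
  exact ⟨by simp, Or.inr (Or.inr (Or.inr (Or.inr (Or.inl ⟨i + t, rfl, rfl⟩))))⟩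

lemma adj4 [Fact (1 < n)] (i : ZMod n) : (DP n t).Adj (.y (i + t)) (.y (i + t - 1)) := by
  rw [DP, SimpleGraph.fromRel_adj]
  refine ⟨?_, Or.inr (Or.inr (Or.inl ⟨i + t - 1, rfl, congrArg _ (by ring)⟩))⟩
  simp only [Ne, DPVert.y.injEq]
  intro h
  exact one_ne_zero (α := ZMod n) (by linear_combination h)

lemma adj5 (i : ZMod n) : (DP n t).Adj (.y (i + t - 1)) (.v (i + t - 1)) := by
  rw [DP, SimpleGraph.fromRel_adj]
  exact ⟨by simp, Or.inl (Or.inr (Or.inr (Or.inr (Or.inl ⟨i + t - 1, rfl, rfl⟩))))⟩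

lemma adj6 (i : ZMod n) : (DP n t).Adj (.v (i + t - 1)) (.u (i - 1)) := by
  rw [DP, SimpleGraph.fromRel_adj]
  exact ⟨by simp, Or.inr (Or.inr (Or.inr (Or.inr (Or.inr (Or.inl
    ⟨i - 1, rfl, congrArg _ (by ring)⟩)))))⟩

lemma adj7 (i : ZMod n) : (DP n t).Adj (.u (i - 1)) (.x (i - 1)) := by
  rw [DP, SimpleGraph.fromRel_adj]
  exact ⟨by simp, Or.inr (Or.inr (Or.inr (Or.inl ⟨i - 1, rfl, rfl⟩)))⟩

lemma adj8 [Fact (1 < n)] (i : ZMod n) : (DP n t).Adj (.x (i - 1)) (.x (i - 2)) := by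
  rw [DP, SimpleGraph.fromRel_adj]
  refine ⟨?_, Or.inr (Or.inl ⟨i - 2, rfl, congrArg _ (by ring)⟩)⟩
  simp only [Ne, DPVert.x.injEq]
  intro h
  exact one_ne_zero (α := ZMod n) (by linear_combination h)

/-! ### The walk -/

def block [Fact (1 < n)] (i : ZMod n) : (DP n t).Walk (.x i) (.x (i - 2)) :=
  .cons (adj1 i) (.cons (adj2 i) (.cons (adj3 i) (.cons (adj4 i) (.cons (adj5 i)
    (.cons (adj6 i) (.cons (adj7 i) (.cons (adj8 i) .nil)))))))

def blocks [Fact (1 < n)] : (m : ℕ) → (DP n t).Walk (.x 0) (.x (-((2 * m : ℕ) : ZMod n)))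
  | 0 => Walk.nil.copy rfl (by simp)
  | (m + 1) => ((blocks m).append (block (-((2 * m : ℕ) : ZMod n)))).copy rfl
      (by rw [show ((-((2 * m : ℕ) : ZMod n)) - 2) = -((2 * (m + 1) : ℕ) : ZMod n) by
        push_cast; ring])

/-! ### Support lists -/

def blockL (n t : ℕ) (k : ℕ) : List (DPVert n) :=
  [.x (-((2 * k : ℕ) : ZMod n)), .u (-((2 * k : ℕ) : ZMod n)),
   .v ((t : ZMod n) - ((2 * k : ℕ) : ZMod n)), .y ((t : ZMod n) - ((2 * k : ℕ) : ZMod n)),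
   .y ((t : ZMod n) - ((2 * k + 1 : ℕ) : ZMod n)), .v ((t : ZMod n) - ((2 * k + 1 : ℕ) : ZMod n)),
   .u (-((2 * k + 1 : ℕ) : ZMod n)), .x (-((2 * k + 1 : ℕ) : ZMod n))]

def fullL (n t m : ℕ) : List (DPVert n) := (List.range m).flatMap (blockL n t)

lemma support_block [Fact (1 < n)] (k : ℕ) :
    (block (t := t) (-((2 * k : ℕ) : ZMod n))).support
      = blockL n t k ++ [.x (-((2 * (k + 1) : ℕ) : ZMod n))] := by
  simp only [block, Walk.support_cons, Walk.support_nil, blockL, List.cons_append,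
    List.nil_append, List.cons.injEq, DPVert.x.injEq, DPVert.u.injEq, DPVert.v.injEq,
    DPVert.y.injEq, and_true]
  and_intros <;> push_cast <;> try ring

lemma support_blocks [Fact (1 < n)] (m : ℕ) :
    (blocks (t := t) m).support = fullL n t m ++ [.x (-((2 * m : ℕ) : ZMod n))] := by
  induction m with
  | zero => simp [blocks, fullL]
  | succ m ih =>
    rw [blocks, Walk.support_copy, Walk.support_append, ih, support_block]
    have hstep : fullL n t (m + 1) = fullL n t m ++ blockL n t m := by
      rw [fullL, fullL, List.range_succ, List.flatMap_append]
      simp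
    rw [hstep]
    simp [blockL]

lemma length_fullL (m : ℕ) : (fullL n t m).length = 8 * m := by
  induction m with
  | zero => simp [fullL]
  | succ m ih =>
    rw [fullL, List.range_succ, List.flatMap_append, ← fullL]
    simp [ih, blockL]; ring

/-! ### Arithmetic helpers -/

lemma cast_ne {p q : ℕ} (h : p % n ≠ q % n) : ((p : ℕ) : ZMod n) ≠ ((q : ℕ) : ZMod n) := by
  rwa [Ne, ZMod.natCast_eq_natCast_iff']

lemma neg_ne {p q : ℕ} (h : p % n ≠ q % n) : (-(p : ZMod n)) ≠ (-(q : ZMod n)) := by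
  rw [Ne, neg_inj]; exact cast_ne h

lemma sub_ne {p q : ℕ} (h : p % n ≠ q % n) : ((t : ZMod n) - p) ≠ ((t : ZMod n) - q) := by
  rw [Ne, sub_right_inj]; exact cast_ne h

/-! ### Nodup -/

lemma nodup_fullL {m : ℕ} (hm : n = 2 * m) : (fullL n t m).Nodup := by
  rw [fullL, List.nodup_flatMap]
  constructor
  · intro k hk
    rw [List.mem_range] at hk
    simp only [blockL, List.nodup_cons, List.mem_cons, List.not_mem_nil, or_false,
      List.nodup_nil, and_true, List.mem_singleton]
    simp only [DPVert.x.injEq, DPVert.u.injEq, DPVert.v.injEq, DPVert.y.injEq, not_or,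
      reduceCtorEq, not_false_eq_true, and_true, true_and]
    refine ⟨?_, ?_, ?_, ?_⟩ <;>
      first
        | (apply neg_ne; rw [Nat.mod_eq_of_lt (by omega), Nat.mod_eq_of_lt (by omega)]; omega)
        | (apply sub_ne; rw [Nat.mod_eq_of_lt (by omega), Nat.mod_eq_of_lt (by omega)]; omega)
  · rw [List.pairwise_iff_getElem]
    intro a b ha hb hab
    simp only [List.length_range] at ha hb
    simp only [List.getElem_range, Function.onFun]
    intro w hwa hwb
    simp only [blockL, List.mem_cons, List.not_mem_nil, or_false] at hwa hwb
    rcases hwa with rfl | rfl | rfl | rfl | rfl | rfl | rfl | rfl <;>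
      simp only [DPVert.x.injEq, DPVert.u.injEq, DPVert.v.injEq, DPVert.y.injEq, not_or,
        reduceCtorEq, not_false_eq_true, and_true, true_and, false_or, or_false] at hwb <;>
      rcases hwb with h | h <;>
      revert h <;>
      first
        | (apply neg_ne; rw [Nat.mod_eq_of_lt (by omega), Nat.mod_eq_of_lt (by omega)]; omega)
        | (apply sub_ne; rw [Nat.mod_eq_of_lt (by omega), Nat.mod_eq_of_lt (by omega)]; omega)

/-! ### Surjectivity -/

lemma mem_fullL [NeZero n] {m : ℕ} (hm : n = 2 * m) (w : DPVert n) : w ∈ fullL n t m := by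
  have key : ∀ j : ZMod n, ∃ k, k < m ∧ (j = -((2 * k : ℕ) : ZMod n) ∨
      j = -((2 * k + 1 : ℕ) : ZMod n)) := by
    intro j
    have ha : (-j).val < n := ZMod.val_lt (-j)
    have hj : j = -(((-j).val : ℕ) : ZMod n) := by
      rw [ZMod.natCast_val, ZMod.cast_id, neg_neg]
    set a := (-j).val with hadef
    rcases Nat.even_or_odd a with ⟨k, hk⟩ | ⟨k, hk⟩
    · exact ⟨k, by omega, Or.inl (by rw [hj, show a = 2 * k by omega])⟩
    · exact ⟨k, by omega, Or.inr (by rw [hj, show a = 2 * k + 1 by omega])⟩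
  have key2 : ∀ j : ZMod n, ∃ k, k < m ∧ (j = (t : ZMod n) - ((2 * k : ℕ) : ZMod n) ∨
      j = (t : ZMod n) - ((2 * k + 1 : ℕ) : ZMod n)) := by
    intro j
    obtain ⟨k, hk, h⟩ := key (j - t)
    refine ⟨k, hk, ?_⟩
    rcases h with h | h
    · exact Or.inl (by rw [← sub_add_cancel j (t : ZMod n), h]; ring)
    · exact Or.inr (by rw [← sub_add_cancel j (t : ZMod n), h]; ring)
  cases w with
  | x j =>
    obtain ⟨k, hk, h⟩ := key j
    refine List.mem_flatMap.mpr ⟨k, List.mem_range.mpr hk, ?_⟩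
    simp only [blockL, List.mem_cons, List.not_mem_nil, or_false, List.mem_singleton,
      DPVert.x.injEq, reduceCtorEq, false_or, or_false]
    tauto
  | u j =>
    obtain ⟨k, hk, h⟩ := key j
    refine List.mem_flatMap.mpr ⟨k, List.mem_range.mpr hk, ?_⟩
    simp only [blockL, List.mem_cons, List.not_mem_nil, or_false, List.mem_singleton,
      DPVert.u.injEq, reduceCtorEq, false_or, or_false]
    tauto
  | v j =>
    obtain ⟨k, hk, h⟩ := key2 j
    refine List.mem_flatMap.mpr ⟨k, List.mem_range.mpr hk, ?_⟩
    simp only [blockL, List.mem_cons, List.not_mem_nil, or_false, List.mem_singleton,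
      DPVert.v.injEq, reduceCtorEq, false_or, or_false]
    tauto
  | y j =>
    obtain ⟨k, hk, h⟩ := key2 j
    refine List.mem_flatMap.mpr ⟨k, List.mem_range.mpr hk, ?_⟩
    simp only [blockL, List.mem_cons, List.not_mem_nil, or_false, List.mem_singleton,
      DPVert.y.injEq, reduceCtorEq, false_or, or_false]
    tauto

lemma head_fullL (m' : ℕ) : ∃ l, fullL n t (m' + 1) = .x (0 : ZMod n) :: l := by
  refine ⟨[.u (-((2 * 0 : ℕ) : ZMod n)),
    .v ((t : ZMod n) - ((2 * 0 : ℕ) : ZMod n)), .y ((t : ZMod n) - ((2 * 0 : ℕ) : ZMod n)),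
    .y ((t : ZMod n) - ((2 * 0 + 1 : ℕ) : ZMod n)),
    .v ((t : ZMod n) - ((2 * 0 + 1 : ℕ) : ZMod n)),
    .u (-((2 * 0 + 1 : ℕ) : ZMod n)), .x (-((2 * 0 + 1 : ℕ) : ZMod n))] ++
      (List.map Nat.succ (List.range m')).flatMap (blockL n t), ?_⟩
  rw [fullL, List.range_succ_eq_map, List.flatMap_cons]
  simp [blockL]

end DPHam

theorem DP_hamiltonian_of_even (n t : ℕ) (hn : 4 ≤ n) (heven : Even n)
    (ht : 2 ≤ 2 * t) (htn : 2 * t < n) :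
    ∃ (a : DPVert n) (w : (DP n t).Walk a a), w.IsHamiltonianCycle := by
  classical
  haveI : Fact (1 < n) := ⟨by omega⟩
  haveI : NeZero n := ⟨by omega⟩
  obtain ⟨m, hm'⟩ := heven
  have hm : n = 2 * m := by omega
  have hzero : ((2 * m : ℕ) : ZMod n) = 0 := by rw [← hm]; exact ZMod.natCast_self n
  refine ⟨.x 0, (DPHam.blocks (t := t) m).copy rfl (by rw [hzero, neg_zero]), ?_⟩
  set W := (DPHam.blocks (t := t) m).copy rfl (by rw [hzero, neg_zero]) with hW
  have hsupp : W.support = DPHam.fullL n t m ++ [.x (0 : ZMod n)] := by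
    rw [hW, SimpleGraph.Walk.support_copy, DPHam.support_blocks, hzero, neg_zero]
  obtain ⟨m', rfl⟩ : ∃ m', m = m' + 1 := ⟨m - 1, by omega⟩
  obtain ⟨l, hl⟩ := DPHam.head_fullL (n := n) (t := t) m'
  have hnd : (DPHam.fullL n t (m' + 1)).Nodup := DPHam.nodup_fullL hm
  have htail : W.support.tail = l ++ [.x (0 : ZMod n)] := by
    rw [hsupp, hl]; rfl
  have hlen : W.length = 8 * (m' + 1) := by
    have h1 := SimpleGraph.Walk.length_support W
    have h2 := congrArg List.length hsupp
    rw [h1] at h2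
    simp only [List.length_append, List.length_singleton, DPHam.length_fullL] at h2
    omega
  rw [SimpleGraph.Walk.isHamiltonianCycle_iff_isCycle_and_support_count_tail_eq_one]
  constructor
  · apply DPHam.isCycle_of_tail_nodup
    · omega
    · rw [htail]
      rw [hl, List.nodup_cons] at hnd
      simp only [List.nodup_append, List.nodup_singleton, true_and, List.disjoint_singleton]
      exact ⟨hnd.2, by simpa using fun b (hb : b ∈ l) (hbx : b = DPVert.x 0) => hnd.1 (hbx ▸ hb)⟩
  · intro a
    have hmem : a ∈ DPHam.fullL n t (m' + 1) := DPHam.mem_fullL hm a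
    have hcount : (DPHam.fullL n t (m' + 1)).count a = 1 :=
      List.count_eq_one_of_mem hnd hmem
    rw [htail, List.count_append]
    rw [hl, List.count_cons] at hcount
    simp only [List.count_singleton]
    by_cases hax : a = DPVert.x 0
    · subst hax; simp at hcount ⊢; omega
    · simp [hax] at hcount ⊢
      simpa using hcount
end

section
/- For every even n ≥ 4 and 2 ≤ 2t < n, the concatenation of the paths X_i : u_{2i} x_{2i} x_{2i+1} u_{2i+1} v_{2i+1-t} y_{2i+1-t} y_{2i+2-t} v_{2i+2-t} u_{2(i+1)} for i = 0, 1, ..., n/2 − 1 forms a Hamilton cycle in DP(n, t). -/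
namespace DPH
open DPVert SimpleGraph Walk

variable {n t : ℕ}

lemma adj_ux (j : ZMod n) : (DP n t).Adj (u j) (x j) := by
  simp only [DP, SimpleGraph.fromRel_adj]
  exact ⟨by simp, Or.inr (Or.inr (Or.inr (Or.inl ⟨j, rfl, rfl⟩)))⟩

lemma adj_xx (h1 : (1 : ZMod n) ≠ 0) (j : ZMod n) : (DP n t).Adj (x j) (x (j + 1)) := by
  simp only [DP, SimpleGraph.fromRel_adj]
  refine ⟨?_, Or.inl (Or.inl ⟨j, rfl, rfl⟩)⟩
  intro hEq
  injection hEq with h'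
  exact h1 (by linear_combination -h')

lemma adj_yy (h1 : (1 : ZMod n) ≠ 0) (j : ZMod n) : (DP n t).Adj (y j) (y (j + 1)) := by
  simp only [DP, SimpleGraph.fromRel_adj]
  refine ⟨?_, Or.inl (Or.inr (Or.inl ⟨j, rfl, rfl⟩))⟩
  intro hEq
  injection hEq with h'
  exact h1 (by linear_combination -h')

lemma adj_xu (j : ZMod n) : (DP n t).Adj (x j) (u j) := by
  simp only [DP, SimpleGraph.fromRel_adj]
  exact ⟨by simp, Or.inl (Or.inr (Or.inr (Or.inl ⟨j, rfl, rfl⟩)))⟩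

lemma adj_yv (j : ZMod n) : (DP n t).Adj (y j) (v j) := by
  simp only [DP, SimpleGraph.fromRel_adj]
  exact ⟨by simp, Or.inl (Or.inr (Or.inr (Or.inr (Or.inl ⟨j, rfl, rfl⟩))))⟩

lemma adj_vy (j : ZMod n) : (DP n t).Adj (v j) (y j) := by
  simp only [DP, SimpleGraph.fromRel_adj]
  exact ⟨by simp, Or.inr (Or.inr (Or.inr (Or.inr (Or.inl ⟨j, rfl, rfl⟩))))⟩

lemma adj_vu (j : ZMod n) : (DP n t).Adj (v j) (u (j + (t : ZMod n))) := by
  simp only [DP, SimpleGraph.fromRel_adj]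
  exact ⟨by simp, Or.inl (Or.inr (Or.inr (Or.inr (Or.inr (Or.inr ⟨j, rfl, rfl⟩)))))⟩

lemma adj_uv' (j : ZMod n) : (DP n t).Adj (u (j + (t : ZMod n))) (v j) := by
  simp only [DP, SimpleGraph.fromRel_adj]
  exact ⟨by simp, Or.inr (Or.inr (Or.inr (Or.inr (Or.inr (Or.inr ⟨j, rfl, rfl⟩)))))⟩

-- adjacency lemmas shaped for the block walk
lemma adjA (i : ℕ) : (DP n t).Adj (u ((2*i : ℕ) : ZMod n)) (x ((2*i : ℕ) : ZMod n)) :=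
  adj_ux _

lemma adjB (h1 : (1 : ZMod n) ≠ 0) (i : ℕ) :
    (DP n t).Adj (x ((2*i : ℕ) : ZMod n)) (x ((2*i+1 : ℕ) : ZMod n)) := by
  have := adj_xx (t := t) h1 ((2*i : ℕ) : ZMod n)
  rwa [show ((2*i : ℕ) : ZMod n) + 1 = ((2*i+1 : ℕ) : ZMod n) by push_cast; ring] at this

lemma adjC (i : ℕ) : (DP n t).Adj (x ((2*i+1 : ℕ) : ZMod n)) (u ((2*i+1 : ℕ) : ZMod n)) :=
  adj_xu _

lemma adjD (i : ℕ) : (DP n t).Adj (u ((2*i+1 : ℕ) : ZMod n))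
    (v (((2*i+1 : ℕ) : ZMod n) - (t : ZMod n))) := by
  have := adj_uv' (n := n) (t := t) (((2*i+1 : ℕ) : ZMod n) - (t : ZMod n))
  rwa [sub_add_cancel] at this

lemma adjE (i : ℕ) : (DP n t).Adj (v (((2*i+1 : ℕ) : ZMod n) - (t : ZMod n)))
    (y (((2*i+1 : ℕ) : ZMod n) - (t : ZMod n))) :=
  adj_vy _

lemma adjF (h1 : (1 : ZMod n) ≠ 0) (i : ℕ) :
    (DP n t).Adj (y (((2*i+1 : ℕ) : ZMod n) - (t : ZMod n)))
      (y (((2*i+2 : ℕ) : ZMod n) - (t : ZMod n))) := by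
  have := adj_yy (t := t) h1 ((((2*i+1 : ℕ) : ZMod n) - (t : ZMod n)))
  rwa [show (((2*i+1 : ℕ) : ZMod n) - (t : ZMod n)) + 1
      = (((2*i+2 : ℕ) : ZMod n) - (t : ZMod n)) by push_cast; ring] at this

lemma adjG (i : ℕ) : (DP n t).Adj (y (((2*i+2 : ℕ) : ZMod n) - (t : ZMod n)))
    (v (((2*i+2 : ℕ) : ZMod n) - (t : ZMod n))) :=
  adj_yv _

lemma adjH (i : ℕ) : (DP n t).Adj (v (((2*i+2 : ℕ) : ZMod n) - (t : ZMod n)))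
    (u ((2*i+2 : ℕ) : ZMod n)) := by
  have := adj_vu (n := n) (t := t) ((((2*i+2 : ℕ) : ZMod n) - (t : ZMod n)))
  rwa [sub_add_cancel] at this

def blockWalk (n t : ℕ) (h1 : (1 : ZMod n) ≠ 0) (i : ℕ) :
    (DP n t).Walk (DPVert.u ((2*i : ℕ) : ZMod n)) (DPVert.u ((2*i+2 : ℕ) : ZMod n)) :=
  .cons (adjA i) (.cons (adjB h1 i) (.cons (adjC i) (.cons (adjD i) (.cons (adjE i)
    (.cons (adjF h1 i) (.cons (adjG i) (.cons (adjH i) .nil)))))))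

def LB (n t : ℕ) (i : ℕ) : List (DPVert n) :=
  [DPVert.u ((2 * i : ℕ) : ZMod n),
   DPVert.x ((2 * i : ℕ) : ZMod n),
   DPVert.x ((2 * i + 1 : ℕ) : ZMod n),
   DPVert.u ((2 * i + 1 : ℕ) : ZMod n),
   DPVert.v (((2 * i + 1 : ℕ) : ZMod n) - (t : ZMod n)),
   DPVert.y (((2 * i + 1 : ℕ) : ZMod n) - (t : ZMod n)),
   DPVert.y (((2 * i + 2 : ℕ) : ZMod n) - (t : ZMod n)),
   DPVert.v (((2 * i + 2 : ℕ) : ZMod n) - (t : ZMod n))]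

lemma support_blockWalk (h1 : (1 : ZMod n) ≠ 0) (i : ℕ) :
    (blockWalk n t h1 i).support = LB n t i ++ [DPVert.u ((2*i+2 : ℕ) : ZMod n)] := rfl

lemma length_blockWalk (h1 : (1 : ZMod n) ≠ 0) (i : ℕ) :
    (blockWalk n t h1 i).length = 8 := rfl

def walkN (n t : ℕ) (h1 : (1 : ZMod n) ≠ 0) : (k : ℕ) →
    (DP n t).Walk (DPVert.u ((0 : ℕ) : ZMod n)) (DPVert.u ((2*k : ℕ) : ZMod n))
  | 0 => Walk.nil
  | (k+1) => (walkN n t h1 k).append (blockWalk n t h1 k)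

lemma support_walkN (h1 : (1 : ZMod n) ≠ 0) (k : ℕ) :
    (walkN n t h1 k).support
      = (List.range k).flatMap (LB n t) ++ [DPVert.u ((2*k : ℕ) : ZMod n)] := by
  induction k with
  | zero => simp [walkN]
  | succ k ih =>
      rw [walkN, Walk.support_append, ih, support_blockWalk]
      rw [List.range_succ, List.flatMap_append, List.flatMap_cons, List.flatMap_nil]
      simp only [LB, List.append_assoc, List.append_nil, List.cons_append, List.nil_append]
      norm_num
      ring

lemma length_walkN (h1 : (1 : ZMod n) ≠ 0) (k : ℕ) :
    (walkN n t h1 k).length = 8 * k := by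
  induction k with
  | zero => rfl
  | succ k ih => rw [walkN, Walk.length_append, ih, length_blockWalk]; ring

end DPH
namespace DPH
variable {n t : ℕ}
open DPVert

lemma count_LB_u (j : ZMod n) (i : ℕ) : (LB n t i).count (DPVert.u j)
    = (if ((2*i:ℕ):ZMod n) = j then 1 else 0) + (if ((2*i+1:ℕ):ZMod n) = j then 1 else 0) := by
  simp [LB, List.count_cons]
  rw [add_comm]

lemma count_LB_x (j : ZMod n) (i : ℕ) : (LB n t i).count (DPVert.x j)
    = (if ((2*i:ℕ):ZMod n) = j then 1 else 0) + (if ((2*i+1:ℕ):ZMod n) = j then 1 else 0) := by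
  simp [LB, List.count_cons]
  rw [add_comm]

lemma count_LB_v (j : ZMod n) (i : ℕ) : (LB n t i).count (DPVert.v j)
    = (if ((2*i+1:ℕ):ZMod n) = j + (t : ZMod n) then 1 else 0)
      + (if ((2*i+2:ℕ):ZMod n) = j + (t : ZMod n) then 1 else 0) := by
  simp [LB, List.count_cons, sub_eq_iff_eq_add]
  rw [add_comm]

lemma count_LB_y (j : ZMod n) (i : ℕ) : (LB n t i).count (DPVert.y j)
    = (if ((2*i+1:ℕ):ZMod n) = j + (t : ZMod n) then 1 else 0)
      + (if ((2*i+2:ℕ):ZMod n) = j + (t : ZMod n) then 1 else 0) := by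
  simp [LB, List.count_cons, sub_eq_iff_eq_add]
  rw [add_comm]

lemma keyA {m : ℕ} (hn : 4 ≤ n) (hm : n = 2*m) (j : ZMod n) :
    ∃ i₀ < m, ∀ i < m,
      ((if ((2*i:ℕ):ZMod n) = j then 1 else 0) + (if ((2*i+1:ℕ):ZMod n) = j then 1 else 0) : ℕ)
        = if i = i₀ then 1 else 0 := by
  haveI : NeZero n := ⟨by omega⟩
  have hr : j.val < n := ZMod.val_lt j
  have hj : ((j.val : ℕ) : ZMod n) = j := by
    have := ZMod.natCast_val (R := ZMod n) j
    simpa [ZMod.cast_id] using this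
  have inj : ∀ a : ℕ, a < n → (((a:ℕ):ZMod n) = j ↔ a = j.val) := by
    intro a ha
    constructor
    · intro h
      have := congrArg ZMod.val h
      rwa [ZMod.val_cast_of_lt ha] at this
    · rintro rfl; exact hj
  refine ⟨j.val / 2, by omega, ?_⟩
  intro i hi
  simp only [inj (2*i) (by omega), inj (2*i+1) (by omega)]
  split_ifs <;> omega

lemma keyB {m : ℕ} (hn : 4 ≤ n) (hm : n = 2*m) (j : ZMod n) :
    ∃ i₀ < m, ∀ i < m,
      ((if ((2*i+1:ℕ):ZMod n) = j then 1 else 0) + (if ((2*i+2:ℕ):ZMod n) = j then 1 else 0) : ℕ)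
        = if i = i₀ then 1 else 0 := by
  haveI : NeZero n := ⟨by omega⟩
  have hr : j.val < n := ZMod.val_lt j
  have hj : ((j.val : ℕ) : ZMod n) = j := by
    have := ZMod.natCast_val (R := ZMod n) j
    simpa [ZMod.cast_id] using this
  have inj : ∀ a : ℕ, a < n → (((a:ℕ):ZMod n) = j ↔ a = j.val) := by
    intro a ha
    constructor
    · intro h
      have := congrArg ZMod.val h
      rwa [ZMod.val_cast_of_lt ha] at this
    · rintro rfl; exact hj
  have critB : ∀ i < m, (((2*i+2:ℕ):ZMod n) = j ↔ (2*i+2 = j.val ∨ (2*i+2 = n ∧ j.val = 0))) := by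
    intro i hi
    constructor
    · intro h
      have hv := congrArg ZMod.val h
      rw [ZMod.val_natCast] at hv
      rcases Nat.lt_or_ge (2*i+2) n with hlt | hge
      · left; rwa [Nat.mod_eq_of_lt hlt] at hv
      · right
        have he : 2*i+2 = n := by omega
        refine ⟨he, ?_⟩
        rw [he, Nat.mod_self] at hv
        omega
    · rintro (h | ⟨h, h0⟩)
      · rw [h]; exact hj
      · rw [h, ZMod.natCast_self, ← hj, h0]
        simp
  refine ⟨if j.val = 0 then m - 1 else if j.val % 2 = 1 then j.val / 2 else j.val / 2 - 1,
    by split_ifs <;> omega, ?_⟩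
  intro i hi
  simp only [inj (2*i+1) (by omega), critB i hi]
  split_ifs <;> omega

lemma sum_delta (m i₀ : ℕ) (h : i₀ < m) (g : ℕ → ℕ)
    (hg : ∀ i < m, g i = if i = i₀ then 1 else 0) :
    ((List.range m).map g).sum = 1 := by
  induction m with
  | zero => omega
  | succ m ih =>
      rw [List.range_succ, List.map_append, List.sum_append]
      simp only [List.map_cons, List.map_nil, List.sum_cons, List.sum_nil]
      rcases Nat.lt_or_ge i₀ m with hlt | hge
      · rw [ih hlt (fun i hi => hg i (by omega))]
        have hgm : g m = 0 := by rw [hg m (by omega)]; simp; omega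
        simp [hgm]
      · have hi₀ : i₀ = m := by omega
        have hzero : ((List.range m).map g).sum = 0 := by
          apply List.sum_eq_zero
          intro x hx
          obtain ⟨i, hi, rfl⟩ := List.mem_map.1 hx
          rw [List.mem_range] at hi
          rw [hg i (by omega)]
          simp
          omega
        rw [hzero, hg m (by omega)]
        simp [hi₀]

lemma count_flat (hn : 4 ≤ n) {m : ℕ} (hm : n = 2*m) (a : DPVert n) :
    ((List.range m).flatMap (LB n t)).count a = 1 := by
  rw [List.count_flatMap]
  cases a with
  | u j =>
      obtain ⟨i₀, hi₀, hkey⟩ := keyA hn hm j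
      exact sum_delta m i₀ hi₀ _ (fun i hi => by
        simp only [Function.comp_apply]
        rw [count_LB_u]; exact hkey i hi)
  | x j =>
      obtain ⟨i₀, hi₀, hkey⟩ := keyA hn hm j
      exact sum_delta m i₀ hi₀ _ (fun i hi => by
        simp only [Function.comp_apply]
        rw [count_LB_x]; exact hkey i hi)
  | v j =>
      obtain ⟨i₀, hi₀, hkey⟩ := keyB hn hm (j + (t : ZMod n))
      exact sum_delta m i₀ hi₀ _ (fun i hi => by
        simp only [Function.comp_apply]
        rw [count_LB_v]; exact hkey i hi)
  | y j =>
      obtain ⟨i₀, hi₀, hkey⟩ := keyB hn hm (j + (t : ZMod n))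
      exact sum_delta m i₀ hi₀ _ (fun i hi => by
        simp only [Function.comp_apply]
        rw [count_LB_y]; exact hkey i hi)

end DPH

open SimpleGraph Walk in
lemma support_getElem_getVert {V : Type*} {G : SimpleGraph V} {u v : V} (p : G.Walk u v) :
    ∀ (i : ℕ) (h : i < p.support.length), p.support[i] = p.getVert i := by
  induction p with
  | nil => intro i h; simp at h; subst h; rfl
  | cons hadj q ih =>
      intro i h
      cases i with
      | zero => rfl
      | succ i =>
          simp only [support_cons, List.getElem_cons_succ, getVert_cons_succ]
          exact ih i (by simpa [length_support] using h)

open SimpleGraph Walk in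
lemma darts_getElem_fst_snd {V : Type*} {G : SimpleGraph V} {u v : V} (p : G.Walk u v) :
    ∀ (i : ℕ) (h : i < p.darts.length),
      p.darts[i].fst = p.getVert i ∧ p.darts[i].snd = p.getVert (i+1) := by
  induction p with
  | nil => intro i h; simp at h
  | cons hadj q ih =>
      intro i h
      cases i with
      | zero =>
          exact ⟨rfl, by simp [getVert_cons_succ]⟩
      | succ i =>
          simp only [darts_cons, List.getElem_cons_succ, getVert_cons_succ]
          exact ih i (by simpa using h)

open SimpleGraph Walk in
theorem closed_edges_nodup {V : Type*} {G : SimpleGraph V} {a : V} (w : G.Walk a a)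
    (hnd : w.support.tail.Nodup) (hlen : w.length ≠ 2) : w.edges.Nodup := by
  classical
  have hslen : w.support.length = w.length + 1 := w.length_support
  have hdlen : w.darts.length = w.length := w.length_darts
  have htlen : w.support.tail.length = w.length := by simp [hslen]
  have hinj : ∀ i j, 1 ≤ i → i ≤ w.length → 1 ≤ j → j ≤ w.length →
      w.getVert i = w.getVert j → i = j := by
    intro i j hi1 hi2 hj1 hj2 hEq
    have e1 : w.support.tail[i-1]'(by omega) = w.support.tail[j-1]'(by omega) := by
      rw [List.getElem_tail, List.getElem_tail,
        support_getElem_getVert _ _ (by omega), support_getElem_getVert _ _ (by omega),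
        show i - 1 + 1 = i by omega, show j - 1 + 1 = j by omega]
      exact hEq
    have := (hnd.getElem_inj_iff).1 e1
    omega
  have h0 : w.getVert 0 = w.getVert w.length := by
    rw [getVert_zero, getVert_length]
  rw [show w.edges = w.darts.map Dart.edge from rfl]
  have hdn : w.darts.Nodup := by
    have h2 := hnd
    rw [← w.map_snd_darts] at h2
    exact h2.of_map _
  refine List.Nodup.map_on ?_ hdn
  intro d1 h1 d2 h2 he
  rcases (dart_edge_eq_iff d1 d2).1 he with h | h
  · exact h
  exfalso
  obtain ⟨j, hj, hj2⟩ := List.getElem_of_mem h1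
  obtain ⟨k, hk, hk2⟩ := List.getElem_of_mem h2
  have hj' : j < w.length := by omega
  have hk' : k < w.length := by omega
  have hjk : j ≠ k := by
    rintro rfl
    have hd : d1 = d2 := by rw [← hj2, ← hk2]
    have h2' : d2 = d2.symm := hd ▸ h
    exact d2.adj.ne (congrArg (fun d => d.toProd.1) h2')
  have F1 := (darts_getElem_fst_snd w j hj).1
  have S1 := (darts_getElem_fst_snd w j hj).2
  have F2 := (darts_getElem_fst_snd w k hk).1
  have S2 := (darts_getElem_fst_snd w k hk).2
  rw [hj2] at F1 S1; rw [hk2] at F2 S2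
  have hd1fst : d1.fst = d2.snd := by rw [h]; rfl
  have hd1snd : d1.snd = d2.fst := by rw [h]; rfl
  -- getVert (j) = getVert (k+1), getVert (j+1) = getVert k
  have e2 : w.getVert j = w.getVert (k+1) := by rw [← F1, ← S2, hd1fst]
  have e1 : w.getVert (j+1) = w.getVert k := by rw [← S1, ← F2, hd1snd]
  rcases Nat.eq_zero_or_pos j with rfl | hjpos
  · have ekL : k + 1 = w.length := by
      have : w.getVert w.length = w.getVert (k+1) := by rw [← h0]; exact e2
      exact (hinj _ _ (by omega) le_rfl (by omega) (by omega) this).symm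
    have : (1:ℕ) = k := hinj 1 k (by omega) (by omega) (by omega) (by omega) e1
    omega
  rcases Nat.eq_zero_or_pos k with rfl | hkpos
  · have ejL : j + 1 = w.length := by
      have : w.getVert (j+1) = w.getVert w.length := by rw [← h0]; exact e1
      exact hinj _ _ (by omega) (by omega) (by omega) le_rfl this
    have : (1:ℕ) = j := hinj 1 j (by omega) (by omega) (by omega) (by omega) e2.symm
    omega
  · have q1 := hinj (j+1) k (by omega) (by omega) (by omega) (by omega) e1
    have q2 := hinj j (k+1) (by omega) (by omega) (by omega) (by omega) e2
    omega

theorem DP_even_explicit_hamilton_cycle (n t : ℕ) (hn : 4 ≤ n) (heven : Even n)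
    (ht : 2 ≤ 2 * t) (htn : 2 * t < n) :
    ∃ w : (DP n t).Walk (DPVert.u 0) (DPVert.u 0),
      w.IsHamiltonianCycle ∧
      w.support =
        ((List.range (n / 2)).flatMap (fun i =>
          [DPVert.u ((2 * i : ℕ) : ZMod n),
           DPVert.x ((2 * i : ℕ) : ZMod n),
           DPVert.x ((2 * i + 1 : ℕ) : ZMod n),
           DPVert.u ((2 * i + 1 : ℕ) : ZMod n),
           DPVert.v (((2 * i + 1 : ℕ) : ZMod n) - (t : ZMod n)),
           DPVert.y (((2 * i + 1 : ℕ) : ZMod n) - (t : ZMod n)),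
           DPVert.y (((2 * i + 2 : ℕ) : ZMod n) - (t : ZMod n)),
           DPVert.v (((2 * i + 2 : ℕ) : ZMod n) - (t : ZMod n))]))
          ++ [DPVert.u 0] := by
  classical
  obtain ⟨r, hr⟩ := heven
  set m := n / 2 with hmdef
  have hm : n = 2 * m := by omega
  have hm2 : 2 ≤ m := by omega
  haveI : Fact (1 < n) := ⟨by omega⟩
  have h1 : (1 : ZMod n) ≠ 0 := one_ne_zero
  have hend : DPVert.u ((2*m : ℕ) : ZMod n) = DPVert.u (0 : ZMod n) := by
    rw [← hm, ZMod.natCast_self]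
  have hstart : DPVert.u ((0 : ℕ) : ZMod n) = DPVert.u (0 : ZMod n) := by norm_num
  set w := (DPH.walkN n t h1 m).copy hstart hend with hw
  have hsupp : w.support = (List.range m).flatMap (DPH.LB n t) ++ [DPVert.u (0 : ZMod n)] := by
    rw [hw, SimpleGraph.Walk.support_copy, DPH.support_walkN, hend]
  have hcnt : ∀ a, ((List.range m).flatMap (DPH.LB n t)).count a = 1 :=
    DPH.count_flat (t := t) hn hm
  obtain ⟨K, hK⟩ : ∃ K, (List.range m).flatMap (DPH.LB n t)
      = DPVert.u (0 : ZMod n) :: K := by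
    obtain ⟨m', hm'⟩ : ∃ m', m = m' + 1 := ⟨m - 1, by omega⟩
    rw [hm', List.range_succ_eq_map, List.flatMap_cons]
    exact ⟨(DPH.LB n t 0).tail ++ (List.map Nat.succ (List.range m')).flatMap (DPH.LB n t),
      by simp [DPH.LB]⟩
  have htail : w.support.tail = K ++ [DPVert.u (0 : ZMod n)] := by
    rw [hsupp, hK]; rfl
  have hcnt_tail : ∀ a, (w.support.tail).count a = 1 := by
    intro a
    have h2 := hcnt a
    rw [hK] at h2
    rw [htail]
    by_cases hau : DPVert.u (0 : ZMod n) = a <;>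
      simp [List.count_append, List.count_cons, hau] at h2 ⊢ <;> omega
  have hnodup_tail : w.support.tail.Nodup := by
    rw [List.nodup_iff_count_le_one]
    exact fun a => (hcnt_tail a).le
  have hlen : w.length = 8 * m := by
    rw [hw, SimpleGraph.Walk.length_copy, DPH.length_walkN]
  have hedges : w.edges.Nodup := closed_edges_nodup w hnodup_tail (by omega)
  have hne : w ≠ SimpleGraph.Walk.nil := by
    intro he
    have h0 := congrArg SimpleGraph.Walk.length he
    rw [hlen] at h0
    simp at h0
    omega
  have hcycle : w.IsCycle := ⟨⟨⟨hedges⟩, hne⟩, hnodup_tail⟩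
  refine ⟨w, ?_, ?_⟩
  · rw [SimpleGraph.Walk.isHamiltonianCycle_iff_isCycle_and_support_count_tail_eq_one]
    exact ⟨hcycle, hcnt_tail⟩
  · rw [hsupp]
    rfl
end

section
/- If n is odd and gcd(n, t) = 1, with n ≥ 3 and 2 ≤ 2t < n, then DP(n, t) has a Hamilton cycle. -/
open SimpleGraph

section GenWalk

variable {V : Type*} [DecidableEq V] {G : SimpleGraph V}

def mkWalk (f : ℕ → V) :
    (j k : ℕ) → (h : ∀ i, j ≤ i → i < j + k → G.Adj (f i) (f (i+1))) → G.Walk (f j) (f (j+k))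
  | j, 0, _ => Walk.nil.copy rfl (by rw [Nat.add_zero])
  | j, (k+1), h =>
      (Walk.cons (h j le_rfl (by omega))
        (mkWalk f (j+1) k (fun i hi hi' => h i (by omega) (by omega)))).copy rfl
        (congrArg f (by omega))

theorem mkWalk_support (f : ℕ → V) (j k : ℕ) (h) :
    (mkWalk (G := G) f j k h).support = (List.range (k+1)).map (fun i => f (j+i)) := by
  induction k generalizing j with
  | zero => simp [mkWalk, List.range_succ]
  | succ k ih =>
      rw [mkWalk]
      simp only [Walk.support_copy, Walk.support_cons, ih]
      rw [@List.range_succ_eq_map (k+1), List.map_cons, List.map_map]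
      refine congrArg₂ List.cons rfl ?_
      refine List.map_congr_left fun i _ => ?_
      simp only [Function.comp_apply]
      exact congrArg f (by omega)

omit [DecidableEq V] in
theorem mkWalk_edges (f : ℕ → V) (j k : ℕ) (h) {e} (he : e ∈ (mkWalk (G := G) f j k h).edges) :
    ∃ i, j ≤ i ∧ i < j + k ∧ e = s(f i, f (i+1)) := by
  induction k generalizing j with
  | zero => simp [mkWalk] at he
  | succ k ih =>
      rw [mkWalk] at he
      simp only [Walk.edges_copy, Walk.edges_cons, List.mem_cons] at he
      rcases he with he | he
      · exact ⟨j, le_rfl, by omega, he⟩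
      · obtain ⟨i, h1, h2, h3⟩ := ih _ _ he
        exact ⟨i, by omega, by omega, h3⟩

theorem ham_of_fn [Fintype V] (m : ℕ) (hm : 3 ≤ m) (hcard : Fintype.card V = m) (f : ℕ → V)
    (hadj : ∀ i < m, G.Adj (f i) (f (i+1)))
    (hinj : ∀ i < m, ∀ j < m, f i = f j → i = j)
    (hf0 : f m = f 0) :
    ∃ (a : V) (w : G.Walk a a), w.IsHamiltonianCycle := by
  have h1m : 1 + (m - 1) = m := by omega
  let p : G.Walk (f 1) (f m) :=
    (mkWalk f 1 (m-1) (fun i hi hi' => hadj i (by omega))).copy rfl (congrArg f (by omega))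
  have hsupp : p.support = (List.range m).map (fun i => f (1 + i)) := by
    simp only [p, Walk.support_copy, mkWalk_support]
    rw [show m - 1 + 1 = m by omega]
  -- injectivity of i ↦ f (1+i) on range m
  have hinj' : ∀ i < m, ∀ j < m, f (1+i) = f (1+j) → i = j := by
    intro i hi j hj hij
    rcases eq_or_lt_of_le (Nat.succ_le_of_lt hi) with hi' | hi' <;>
      rcases eq_or_lt_of_le (Nat.succ_le_of_lt hj) with hj' | hj'
    · omega
    · rw [show 1 + i = m by omega, hf0] at hij
      have := hinj 0 (by omega) (1+j) (by omega) hij; omega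
    · rw [show 1 + j = m by omega, hf0] at hij
      have := hinj (1+i) (by omega) 0 (by omega) hij; omega
    · have := hinj (1+i) (by omega) (1+j) (by omega) hij; omega
  have hnodup : p.support.Nodup := by
    rw [hsupp]
    refine List.Nodup.map_on ?_ (@List.nodup_range m)
    intro i hi j hj hij
    exact hinj' i (List.mem_range.mp hi) j (List.mem_range.mp hj) hij
  have hpath : p.IsPath := SimpleGraph.Walk.IsPath.mk' hnodup
  have hlen : p.support.length = m := by rw [hsupp]; simp
  have hmem : ∀ a : V, a ∈ p.support := by
    intro a
    have hcard' : p.support.toFinset.card = m := by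
      rw [List.toFinset_card_of_nodup hnodup, hlen]
    have : p.support.toFinset = Finset.univ :=
      Finset.eq_univ_of_card _ (by rw [hcard', hcard])
    rw [← List.mem_toFinset, this]; exact Finset.mem_univ a
  have hne : ¬ s(f 0, f 1) ∈ p.edges := by
    intro he
    simp only [p, Walk.edges_copy] at he
    obtain ⟨i, hi1, hi2, hi3⟩ := mkWalk_edges f 1 (m-1) _ he
    rw [Sym2.eq_iff] at hi3
    rcases hi3 with ⟨h01, _⟩ | ⟨h01, h11⟩
    · have := hinj 0 (by omega) i (by omega) h01; omega
    · rcases eq_or_lt_of_le (Nat.succ_le_of_lt hi2) with hi' | hi'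
      · rw [show i + 1 = m by omega, hf0] at h01
        have := hinj 0 (by omega) 0 (by omega) h01
        have := hinj 1 (by omega) i (by omega) h11; omega
      · have := hinj 0 (by omega) (i+1) (by omega) h01; omega
  let p' : G.Walk (f 1) (f 0) := p.copy rfl hf0 |>.copy rfl rfl
  have hp'e : p'.edges = p.edges := by simp [p']
  have hp's : p'.support = p.support := by simp [p']
  let w : G.Walk (f 0) (f 0) := Walk.cons (hadj 0 (by omega)) (p.copy rfl hf0)
  refine ⟨f 0, w, ?_⟩
  rw [SimpleGraph.Walk.isHamiltonianCycle_iff_isCycle_and_support_count_tail_eq_one]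
  constructor
  · rw [SimpleGraph.Walk.cons_isCycle_iff]
    constructor
    · exact (SimpleGraph.Walk.isPath_copy _ _ _).mpr hpath
    · rw [Walk.edges_copy]; exact hne
  · intro a
    have : w.support.tail = p.support := by
      simp only [w, Walk.support_cons, List.tail_cons, Walk.support_copy]
    rw [this]
    have c1 : List.count a p.support ≤ 1 := List.nodup_iff_count_le_one.mp hnodup a
    have c2 : 0 < List.count a p.support := List.count_pos_iff.mpr (hmem a)
    omega

end GenWalk

def hamf (n t M : ℕ) (k : ℕ) : DPVert n :=
  if k < n then .x (k : ZMod n)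
  else if k < 3*n - 2*M then
    (if (k - n) % 2 = 0 then DPVert.u else DPVert.v) ((((k-n)*t : ℕ) : ZMod n) - 1)
  else if k < 4*n - 2*M then .y (((k - (3*n - 2*M) : ℕ) : ZMod n) - (t : ZMod n))
  else if k < 4*n then
    (if (k - (4*n - 2*M)) % 2 = 0 then DPVert.v else DPVert.u)
      (-(((k - (4*n-2*M) + 1)*t : ℕ) : ZMod n) - 1)
  else .x 0

section
variable (n t M : ℕ)

lemma hamf_last (hn : 3 ≤ n) (hM2 : M < n) : hamf n t M (4*n) = hamf n t M 0 := by
  rw [hamf, hamf]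
  rw [if_neg (by omega), if_neg (by omega), if_neg (by omega), if_neg (by omega),
    if_pos (by omega)]
  norm_num

lemma dp_adj_iff (a b : DPVert n) :
    (DP n t).Adj a b ↔ a ≠ b ∧
    (((∃ i, a = DPVert.x i ∧ b = DPVert.x (i + 1)) ∨
    (∃ i, a = DPVert.y i ∧ b = DPVert.y (i + 1)) ∨
    (∃ i, a = DPVert.x i ∧ b = DPVert.u i) ∨
    (∃ i, a = DPVert.y i ∧ b = DPVert.v i) ∨
    (∃ i, a = DPVert.u i ∧ b = DPVert.v (i + (t : ZMod n))) ∨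
    (∃ i, a = DPVert.v i ∧ b = DPVert.u (i + (t : ZMod n)))) ∨
    ((∃ i, b = DPVert.x i ∧ a = DPVert.x (i + 1)) ∨
    (∃ i, b = DPVert.y i ∧ a = DPVert.y (i + 1)) ∨
    (∃ i, b = DPVert.x i ∧ a = DPVert.u i) ∨
    (∃ i, b = DPVert.y i ∧ a = DPVert.v i) ∨
    (∃ i, b = DPVert.u i ∧ a = DPVert.v (i + (t : ZMod n))) ∨
    (∃ i, b = DPVert.v i ∧ a = DPVert.u (i + (t : ZMod n))))) :=
  SimpleGraph.fromRel_adj _ a b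
end

section
variable (n t M : ℕ)

lemma hamf_eq_x {k : ℕ} (h : k < n) : hamf n t M k = .x (k : ZMod n) := by
  rw [hamf, if_pos h]

lemma hamf_eq_uv {k : ℕ} (h1 : n ≤ k) (h2 : k < 3*n-2*M) :
    hamf n t M k = (if (k-n) % 2 = 0 then DPVert.u else DPVert.v)
      ((((k-n)*t : ℕ) : ZMod n) - 1) := by
  rw [hamf, if_neg (by omega), if_pos h2]

lemma hamf_eq_y {k : ℕ} (hM2 : M < n) (h1 : 3*n-2*M ≤ k) (h2 : k < 4*n-2*M) :
    hamf n t M k = .y (((k - (3*n - 2*M) : ℕ) : ZMod n) - (t : ZMod n)) := by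
  rw [hamf, if_neg (by omega), if_neg (by omega), if_pos h2]

lemma hamf_eq_vu {k : ℕ} (hM1 : 1 ≤ M) (hM2 : M < n) (h1 : 4*n-2*M ≤ k) (h2 : k < 4*n) :
    hamf n t M k = (if (k - (4*n - 2*M)) % 2 = 0 then DPVert.v else DPVert.u)
      (-(((k - (4*n-2*M) + 1)*t : ℕ) : ZMod n) - 1) := by
  rw [hamf, if_neg (by omega), if_neg (by omega), if_neg (by omega), if_pos h2]

lemma hamf_eq_x0 {k : ℕ} (hn : 1 ≤ n) (h : 4*n ≤ k) : hamf n t M k = .x 0 := by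
  rw [hamf, if_neg (by omega), if_neg (by omega), if_neg (by omega), if_neg (by omega)]

lemma hamf_adj (hn : 3 ≤ n) (ht1 : 1 ≤ t) (htn : 2*t < n) (hM1 : 1 ≤ M) (hM2 : M < n)
    (hkey : ((2*M*t : ℕ) : ZMod n) = -1) :
    ∀ i < 4*n, (DP n t).Adj (hamf n t M i) (hamf n t M (i+1)) := by
  haveI : NeZero n := ⟨by omega⟩
  haveI : Fact (1 < n) := ⟨by omega⟩
  have h10 : (1 : ZMod n) ≠ 0 := one_ne_zero
  have hn0 : ((n : ℕ) : ZMod n) = 0 := ZMod.natCast_self n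
  have hn1 : ((n - 1 : ℕ) : ZMod n) = -1 := by
    have h : ((n-1 : ℕ) : ZMod n) + 1 = ((n-1+1 : ℕ) : ZMod n) := by push_cast; ring
    rw [show n-1+1 = n from by omega, hn0] at h
    linear_combination h
  intro i hi
  rw [dp_adj_iff]
  by_cases c1 : i + 1 < n
  · -- x to x
    rw [hamf_eq_x n t M (by omega), hamf_eq_x n t M c1]
    refine ⟨?_, Or.inl (Or.inl ⟨(i : ZMod n), rfl, by push_cast; ring_nf⟩)⟩
    intro hcon
    rw [DPVert.x.injEq] at hcon
    push_cast at hcon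
    rw [left_eq_add] at hcon
    exact h10 hcon
  by_cases c2 : i + 1 = n
  · -- x (n-1) to u (-1)
    rw [hamf_eq_x n t M (by omega), hamf_eq_uv n t M (by omega) (by omega),
      if_pos (by omega : (i+1-n) % 2 = 0)]
    refine ⟨by simp, Or.inl (Or.inr (Or.inr (Or.inl ⟨(i : ZMod n), rfl, ?_⟩)))⟩
    rw [DPVert.u.injEq, show i+1-n = 0 from by omega, show (i : ℕ) = n - 1 from by omega, hn1]
    norm_num
  by_cases c3 : i + 1 < 3*n - 2*M
  · -- region 2 internal
    rw [hamf_eq_uv n t M (by omega) (by omega), hamf_eq_uv n t M (by omega) c3]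
    rw [show i+1-n = (i-n)+1 from by omega, show ((i-n)+1)*t = (i-n)*t + t from by ring]
    by_cases hp : (i - n) % 2 = 0
    · rw [if_pos hp, if_neg (by omega)]
      refine ⟨by simp, Or.inl (Or.inr (Or.inr (Or.inr (Or.inr (Or.inl
        ⟨(((i-n)*t : ℕ) : ZMod n) - 1, rfl, ?_⟩)))))⟩
      rw [DPVert.v.injEq]; push_cast; ring
    · rw [if_neg hp, if_pos (by omega)]
      refine ⟨by simp, Or.inl (Or.inr (Or.inr (Or.inr (Or.inr (Or.inr
        ⟨(((i-n)*t : ℕ) : ZMod n) - 1, rfl, ?_⟩)))))⟩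
      rw [DPVert.u.injEq]; push_cast; ring
  by_cases c4 : i + 1 = 3*n - 2*M
  · -- v (-t) to y (-t)
    have hnat : (2*n-2*M-1)*t + (2*M*t + t) = 2*n*t := by
      calc (2*n-2*M-1)*t + (2*M*t + t) = ((2*n-2*M-1) + (2*M + 1))*t := by ring
        _ = 2*n*t := by rw [show (2*n-2*M-1) + (2*M+1) = 2*n from by omega]
    have h2nt : ((2*n*t : ℕ) : ZMod n) = 0 := by push_cast [hn0]; ring
    have e1 : (((2*n-2*M-1)*t : ℕ) : ZMod n) = 1 - (t : ZMod n) := by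
      have h := congrArg (Nat.cast : ℕ → ZMod n) hnat
      push_cast at h
      rw [show ((2*(n:ZMod n))*t) = 0 from by rw [← h2nt]; push_cast; ring] at h
      push_cast at hkey
      push_cast
      linear_combination h - hkey
    rw [hamf_eq_uv n t M (by omega) (by omega), hamf_eq_y n t M hM2 (by omega) (by omega)]
    rw [show i - n = 2*n-2*M-1 from by omega, if_neg (by omega : ¬ (2*n-2*M-1) % 2 = 0),
      show i+1 - (3*n-2*M) = 0 from by omega]
    refine ⟨by simp, Or.inr (Or.inr (Or.inr (Or.inr (Or.inl
      ⟨(((0:ℕ)) : ZMod n) - t, rfl, ?_⟩))))⟩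
    rw [DPVert.v.injEq, e1]
    push_cast; ring
  by_cases c5 : i + 1 < 4*n - 2*M
  · -- y internal
    rw [hamf_eq_y n t M hM2 (by omega) (by omega), hamf_eq_y n t M hM2 (by omega) c5]
    rw [show i+1 - (3*n-2*M) = (i - (3*n-2*M)) + 1 from by omega]
    refine ⟨?_, Or.inl (Or.inr (Or.inl ⟨((i - (3*n-2*M) : ℕ) : ZMod n) - t, rfl, ?_⟩))⟩
    · intro hcon
      rw [DPVert.y.injEq] at hcon
      push_cast at hcon
      exact h10 (by linear_combination - hcon)
    · rw [DPVert.y.injEq]; push_cast; ring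
  by_cases c6 : i + 1 = 4*n - 2*M
  · -- y (-t-1) to v (-t-1)
    rw [hamf_eq_y n t M hM2 (by omega) (by omega),
      hamf_eq_vu n t M hM1 hM2 (by omega) (by omega)]
    rw [show i - (3*n-2*M) = n - 1 from by omega, show i+1 - (4*n-2*M) = 0 from by omega,
      if_pos (by norm_num : (0:ℕ) % 2 = 0)]
    refine ⟨by simp, Or.inl (Or.inr (Or.inr (Or.inr (Or.inl
      ⟨((n-1 : ℕ) : ZMod n) - t, rfl, ?_⟩))))⟩
    rw [DPVert.v.injEq, hn1]
    push_cast; ring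
  by_cases c7 : i + 1 < 4*n
  · -- region 4 internal
    rw [hamf_eq_vu n t M hM1 hM2 (by omega) (by omega), hamf_eq_vu n t M hM1 hM2 (by omega) c7]
    rw [show i+1 - (4*n-2*M) = (i - (4*n-2*M)) + 1 from by omega,
      show ((i - (4*n-2*M))+1+1)*t = (i - (4*n-2*M)+1)*t + t from by ring]
    by_cases hp : (i - (4*n-2*M)) % 2 = 0
    · rw [if_pos hp, if_neg (by omega)]
      refine ⟨by simp, Or.inr (Or.inr (Or.inr (Or.inr (Or.inr (Or.inl
        ⟨-(((i - (4*n-2*M) + 1)*t : ℕ) : ZMod n) - 1 - t, ?_, ?_⟩)))))⟩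
      · rw [DPVert.u.injEq]; push_cast; ring
      · rw [DPVert.v.injEq]; push_cast; ring
    · rw [if_neg hp, if_pos (by omega)]
      refine ⟨by simp, Or.inr (Or.inr (Or.inr (Or.inr (Or.inr (Or.inr
        ⟨-(((i - (4*n-2*M) + 1)*t : ℕ) : ZMod n) - 1 - t, ?_, ?_⟩)))))⟩
      · rw [DPVert.v.injEq]; push_cast; ring
      · rw [DPVert.u.injEq]; push_cast; ring
  · -- u 0 to x 0
    rw [hamf_eq_vu n t M hM1 hM2 (by omega) (by omega), hamf_eq_x0 n t M (by omega) (by omega)]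
    rw [show i - (4*n-2*M) = 2*M - 1 from by omega, if_neg (by omega : ¬ (2*M-1) % 2 = 0),
      show 2*M-1+1 = 2*M from by omega]
    refine ⟨by simp, Or.inr (Or.inr (Or.inr (Or.inl ⟨0, rfl, ?_⟩)))⟩
    rw [DPVert.u.injEq]
    linear_combination - hkey
end

section
variable (n t M : ℕ)

lemma eq_of_cast_eq (hn3 : 3 ≤ n) (hodd : n % 2 = 1) {a b : ℕ} (h : (a : ZMod n) = b)
    (hp : a % 2 = b % 2) (ha : a < 2*n) (hb : b < 2*n) : a = b := by
  have hmod := (ZMod.natCast_eq_natCast_iff a b n).mp h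
  obtain ⟨c, hc⟩ := hmod.dvd
  have hb' : (b:ℤ) - a < 2*n := by push_cast; omega
  have ha' : -(2*(n:ℤ)) < (b:ℤ) - a := by push_cast; omega
  rw [hc] at hb' ha'
  have hn' : (0:ℤ) < n := by exact_mod_cast (by omega : 0 < n)
  have hc1 : c < 2 := by nlinarith
  have hc2 : -2 < c := by nlinarith
  interval_cases c <;> omega

lemma cancel_t (hcop : Nat.Coprime t n) {A B : ZMod n} (h : A * (t:ZMod n) = B * t) : A = B := by
  obtain ⟨w, hw⟩ := (ZMod.isUnit_iff_coprime t n).mpr hcop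
  rw [← hw] at h
  exact (w.isUnit).mul_right_cancel h

lemma hamf_inj (hn : 3 ≤ n) (hodd : n % 2 = 1) (hcop : Nat.Coprime t n)
    (hM1 : 1 ≤ M) (hM2 : M < n) :
    ∀ i < 4*n, ∀ j < 4*n, hamf n t M i = hamf n t M j → i = j := by
  haveI : NeZero n := ⟨by omega⟩
  intro i hi j hj h
  have Hi : i < n ∨ (n ≤ i ∧ i < 3*n-2*M) ∨ (3*n-2*M ≤ i ∧ i < 4*n-2*M) ∨
      (4*n-2*M ≤ i ∧ i < 4*n) := by omega
  have Hj : j < n ∨ (n ≤ j ∧ j < 3*n-2*M) ∨ (3*n-2*M ≤ j ∧ j < 4*n-2*M) ∨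
      (4*n-2*M ≤ j ∧ j < 4*n) := by omega
  rcases Hi with ri | ri | ri | ri <;> rcases Hj with rj | rj | rj | rj
  -- (1,1)
  · rw [hamf_eq_x n t M ri, hamf_eq_x n t M rj, DPVert.x.injEq] at h
    have h1 := congrArg ZMod.val h
    rw [ZMod.val_natCast_of_lt ri, ZMod.val_natCast_of_lt rj] at h1
    exact h1
  -- (1,2)
  · rw [hamf_eq_x n t M ri, hamf_eq_uv n t M rj.1 rj.2] at h
    split_ifs at h <;> simp at h
  -- (1,3)
  · rw [hamf_eq_x n t M ri, hamf_eq_y n t M hM2 rj.1 rj.2] at h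
    simp at h
  -- (1,4)
  · rw [hamf_eq_x n t M ri, hamf_eq_vu n t M hM1 hM2 rj.1 rj.2] at h
    split_ifs at h <;> simp at h
  -- (2,1)
  · rw [hamf_eq_x n t M rj, hamf_eq_uv n t M ri.1 ri.2] at h
    split_ifs at h <;> simp at h
  -- (2,2)
  · rw [hamf_eq_uv n t M ri.1 ri.2, hamf_eq_uv n t M rj.1 rj.2] at h
    split_ifs at h with p1 p2 p3 <;> simp only [DPVert.u.injEq, DPVert.v.injEq] at h
    · have hA : ((i-n : ℕ) : ZMod n) * t = ((j-n : ℕ) : ZMod n) * t := by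
        push_cast at h; linear_combination h
      have := eq_of_cast_eq n hn hodd (cancel_t n t hcop hA) (by omega) (by omega) (by omega)
      omega
    · have hA : ((i-n : ℕ) : ZMod n) * t = ((j-n : ℕ) : ZMod n) * t := by
        push_cast at h; linear_combination h
      have := eq_of_cast_eq n hn hodd (cancel_t n t hcop hA) (by omega) (by omega) (by omega)
      omega
  -- (2,3)
  · rw [hamf_eq_uv n t M ri.1 ri.2, hamf_eq_y n t M hM2 rj.1 rj.2] at h
    split_ifs at h <;> simp at h
  -- (2,4)
  · rw [hamf_eq_uv n t M ri.1 ri.2, hamf_eq_vu n t M hM1 hM2 rj.1 rj.2] at h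
    split_ifs at h with p1 p2 p3 <;> simp only [DPVert.u.injEq, DPVert.v.injEq] at h
    all_goals try simp at h
    · have hA : (((i-n) + (j - (4*n-2*M) + 1) : ℕ) : ZMod n) * t = ((0:ℕ) : ZMod n) * t := by
        push_cast; linear_combination h
      have := eq_of_cast_eq n hn hodd (cancel_t n t hcop hA) (by omega) (by omega) (by omega)
      omega
    · have hA : (((i-n) + (j - (4*n-2*M) + 1) : ℕ) : ZMod n) * t = ((0:ℕ) : ZMod n) * t := by
        push_cast; linear_combination h
      have := eq_of_cast_eq n hn hodd (cancel_t n t hcop hA) (by omega) (by omega) (by omega)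
      omega
  -- (3,1)
  · rw [hamf_eq_x n t M rj, hamf_eq_y n t M hM2 ri.1 ri.2] at h
    simp at h
  -- (3,2)
  · rw [hamf_eq_uv n t M rj.1 rj.2, hamf_eq_y n t M hM2 ri.1 ri.2] at h
    split_ifs at h <;> simp at h
  -- (3,3)
  · rw [hamf_eq_y n t M hM2 ri.1 ri.2, hamf_eq_y n t M hM2 rj.1 rj.2,
      DPVert.y.injEq] at h
    have h2 : ((i - (3*n-2*M) : ℕ) : ZMod n) = ((j - (3*n-2*M) : ℕ) : ZMod n) := by
      linear_combination h
    have h1 := congrArg ZMod.val h2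
    rw [ZMod.val_natCast_of_lt (by omega), ZMod.val_natCast_of_lt (by omega)] at h1
    omega
  -- (3,4)
  · rw [hamf_eq_y n t M hM2 ri.1 ri.2, hamf_eq_vu n t M hM1 hM2 rj.1 rj.2] at h
    split_ifs at h <;> simp at h
  -- (4,1)
  · rw [hamf_eq_x n t M rj, hamf_eq_vu n t M hM1 hM2 ri.1 ri.2] at h
    split_ifs at h <;> simp at h
  -- (4,2)
  · rw [hamf_eq_uv n t M rj.1 rj.2, hamf_eq_vu n t M hM1 hM2 ri.1 ri.2] at h
    split_ifs at h with p1 p2 p3 <;> simp only [DPVert.u.injEq, DPVert.v.injEq] at h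
    all_goals try simp at h
    · have hA : (((j-n) + (i - (4*n-2*M) + 1) : ℕ) : ZMod n) * t = ((0:ℕ) : ZMod n) * t := by
        push_cast at h ⊢; linear_combination - h
      have := eq_of_cast_eq n hn hodd (cancel_t n t hcop hA) (by omega) (by omega) (by omega)
      omega
    · have hA : (((j-n) + (i - (4*n-2*M) + 1) : ℕ) : ZMod n) * t = ((0:ℕ) : ZMod n) * t := by
        push_cast at h ⊢; linear_combination - h
      have := eq_of_cast_eq n hn hodd (cancel_t n t hcop hA) (by omega) (by omega) (by omega)
      omega
  -- (4,3)
  · rw [hamf_eq_y n t M hM2 rj.1 rj.2, hamf_eq_vu n t M hM1 hM2 ri.1 ri.2] at h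
    split_ifs at h <;> simp at h
  -- (4,4)
  · rw [hamf_eq_vu n t M hM1 hM2 ri.1 ri.2, hamf_eq_vu n t M hM1 hM2 rj.1 rj.2] at h
    split_ifs at h with p1 p2 p3 <;> simp only [DPVert.u.injEq, DPVert.v.injEq] at h
    · have hA : ((i - (4*n-2*M) + 1 : ℕ) : ZMod n) * t =
          ((j - (4*n-2*M) + 1 : ℕ) : ZMod n) * t := by
        push_cast at h ⊢; linear_combination - h
      have := eq_of_cast_eq n hn hodd (cancel_t n t hcop hA) (by omega) (by omega) (by omega)
      omega
    · have hA : ((i - (4*n-2*M) + 1 : ℕ) : ZMod n) * t =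
          ((j - (4*n-2*M) + 1 : ℕ) : ZMod n) * t := by
        push_cast at h ⊢; linear_combination - h
      have := eq_of_cast_eq n hn hodd (cancel_t n t hcop hA) (by omega) (by omega) (by omega)
      omega
end

def dpEquiv (n : ℕ) : DPVert n ≃ ((ZMod n ⊕ ZMod n) ⊕ (ZMod n ⊕ ZMod n)) where
  toFun := fun a => match a with
    | .x i => .inl (.inl i)
    | .u i => .inl (.inr i)
    | .v i => .inr (.inl i)
    | .y i => .inr (.inr i)
  invFun := fun s => match s with
    | .inl (.inl i) => .x i
    | .inl (.inr i) => .u i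
    | .inr (.inl i) => .v i
    | .inr (.inr i) => .y i
  left_inv := fun a => by cases a <;> rfl
  right_inv := fun s => by rcases s with (i|i)|(i|i) <;> rfl

theorem DP_hamiltonian_of_odd_coprime (n t : ℕ) (hn : 3 ≤ n) (hodd : Odd n)
    (hgcd : Nat.gcd n t = 1) (ht : 2 ≤ 2 * t) (htn : 2 * t < n) :
    ∃ (a : DPVert n) (w : (DP n t).Walk a a), w.IsHamiltonianCycle := by
  haveI : NeZero n := ⟨by omega⟩
  haveI : Fact (1 < n) := ⟨by omega⟩
  haveI : Fintype (DPVert n) := Fintype.ofEquiv _ (dpEquiv n).symm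
  have hcard : Fintype.card (DPVert n) = 4*n := by
    rw [Fintype.card_congr (dpEquiv n)]
    simp only [Fintype.card_sum, ZMod.card]
    ring
  have hcop : Nat.Coprime t n := Nat.coprime_comm.mp hgcd
  have h2n : ¬ (2 ∣ n) := by
    have := Nat.odd_iff.mp hodd; omega
  have hcop2 : Nat.Coprime (2*t) n :=
    Nat.Coprime.mul ((Nat.prime_two.coprime_iff_not_dvd).mpr h2n) hcop
  set z : ZMod n := - ((2*t : ℕ) : ZMod n)⁻¹ with hzdef
  set M := z.val with hMdef
  have hz2t : z * ((2*t : ℕ) : ZMod n) = -1 := by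
    have h1 := ZMod.coe_mul_inv_eq_one (2*t) hcop2
    rw [hzdef, neg_mul, mul_comm]
    rw [h1]
  have hMc : ((M:ℕ) : ZMod n) = z := ZMod.natCast_rightInverse z
  have hkey : ((2*M*t : ℕ) : ZMod n) = -1 := by
    push_cast at hz2t ⊢
    rw [hMdef]  -- no-op; keep
    push_cast at hMc
    linear_combination (2 * (t : ZMod n)) * hMc + hz2t
  have hM1 : 1 ≤ M := by
    by_contra h'
    have hMz : M = 0 := by omega
    have hz0 : z = 0 := by rwa [← ZMod.val_eq_zero]
    rw [hz0, zero_mul] at hz2t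
    exact one_ne_zero (by linear_combination hz2t : (1 : ZMod n) = 0)
  have hM2 : M < n := ZMod.val_lt z
  obtain ⟨a, w, hw⟩ := ham_of_fn (G := DP n t) (4*n) (by omega) hcard (hamf n t M)
    (hamf_adj n t M hn (by omega) htn hM1 hM2 hkey)
    (hamf_inj n t M hn (Nat.odd_iff.mp hodd) hcop hM1 hM2)
    (hamf_last n t M hn hM2)
  exact ⟨a, w, hw⟩
end

section
/- Let n be odd, 2k+1 = gcd(n, t), and a_0, ..., a_{2k} as in the standard construction. In DP(n, t), the paths Q_i : v_{a_i} y_{a_i} y_{a_i+1} ... y_{a_{i+2}−1} v_{a_{i+2}−1} for i ∈ ℤ_{2k+1} (indices of a taken mod 2k+1, vertex indices mod n) are pairwise internally disjoint and together contain every vertex y_m, m ∈ ℤ_n, exactly once. -/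
/-- `a 0, a 1, …, a (2k)` is a "standard construction" sequence:
each `a i` lies in `{0, …, n-1}`, is congruent to `i` mod `2k+1`, and
`a 0 < a 2 < ⋯ < a (2k) < a 1 < a 3 < ⋯ < a (2k-1)`. -/
def GoodSeq (n k : ℕ) (a : ℕ → ℕ) : Prop :=
  (∀ i ≤ 2 * k, a i < n ∧ a i % (2 * k + 1) = i % (2 * k + 1)) ∧
  (∀ j, j < k → a (2 * j) < a (2 * j + 2)) ∧
  (0 < k → a (2 * k) < a 1) ∧
  (∀ j, j + 1 < k → a (2 * j + 1) < a (2 * j + 3))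

/-- Length of the cyclic interval `[a i, a ((i+2) % (2k+1)))` in `ℤ/nℤ`. -/
def intervalLen (n k : ℕ) (a : ℕ → ℕ) (i : ℕ) : ℕ :=
  (a ((i + 2) % (2 * k + 1)) + n - a i - 1) % n + 1

lemma DP_adj_yy (n t : ℕ) (hn : 3 ≤ n) (s : ZMod n) :
    (DP n t).Adj (DPVert.y s) (DPVert.y (s + 1)) := by
  haveI : NeZero n := ⟨by omega⟩
  rw [DP, SimpleGraph.fromRel_adj]
  refine ⟨?_, Or.inl (Or.inr (Or.inl ⟨s, rfl, rfl⟩))⟩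
  simp only [ne_eq, DPVert.y.injEq, left_eq_add]
  intro h
  have : ((1 : ℕ) : ZMod n) = 0 := by exact_mod_cast h
  rw [ZMod.natCast_eq_zero_iff] at this
  have := Nat.le_of_dvd one_pos this
  omega

lemma DP_adj_yv (n t : ℕ) (s : ZMod n) :
    (DP n t).Adj (DPVert.y s) (DPVert.v s) := by
  rw [DP, SimpleGraph.fromRel_adj]
  exact ⟨by simp, Or.inl (Or.inr (Or.inr (Or.inr (Or.inl ⟨s, rfl, rfl⟩))))⟩

lemma yWalk (n t : ℕ) (hn : 3 ≤ n) (s : ZMod n) (c : ℕ) :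
    ∃ w : (DP n t).Walk (DPVert.y s) (DPVert.y (s + (c : ZMod n))),
      w.support = (List.range (c+1)).map (fun j : ℕ => DPVert.y (s + (j : ZMod n))) := by
  induction c with
  | zero => exact ⟨SimpleGraph.Walk.nil.copy rfl (by simp), by simp [List.range_succ]⟩
  | succ c ih =>
    obtain ⟨w, hw⟩ := ih
    have hv : DPVert.y (n := n) (s + (c : ZMod n) + 1) = DPVert.y (s + ((c+1 : ℕ) : ZMod n)) := by
      push_cast
      rw [add_assoc]
    refine ⟨(w.concat (DP_adj_yy n t hn (s + (c : ZMod n)))).copy rfl hv, ?_⟩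
    rw [SimpleGraph.Walk.support_copy, SimpleGraph.Walk.support_concat, hw,
      show List.range (c+1+1) = List.range (c+1) ++ [c+1] from List.range_succ,
      List.map_append, List.map_singleton, ← hv]

lemma vPath (n t : ℕ) (hn : 3 ≤ n) (s : ZMod n) (L : ℕ) (hL2 : 2 ≤ L) (hLn : L ≤ n) :
    ∃ w : (DP n t).Walk (DPVert.v s) (DPVert.v (s + ((L-1 : ℕ) : ZMod n))),
      w.IsPath ∧ w.support = DPVert.v s ::
        ((List.range L).map (fun j : ℕ => DPVert.y (s + (j : ZMod n))) ++
          [DPVert.v (s + ((L-1:ℕ) : ZMod n))]) := by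
  haveI : NeZero n := ⟨by omega⟩
  obtain ⟨w0, hw0⟩ := yWalk n t hn s (L-1)
  refine ⟨SimpleGraph.Walk.cons (DP_adj_yv n t s).symm
      (w0.concat (DP_adj_yv n t (s + ((L-1:ℕ) : ZMod n)))), ?_, ?_⟩
  · apply SimpleGraph.Walk.IsPath.mk'
    rw [SimpleGraph.Walk.support_cons, SimpleGraph.Walk.support_concat, hw0]
    have hinj : ∀ j ∈ List.range L, ∀ j' ∈ List.range L,
        DPVert.y (n := n) (s + (j:ZMod n)) = DPVert.y (s + (j' : ZMod n)) → j = j' := by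
      intro j hj j' hj' h
      simp only [DPVert.y.injEq, add_right_inj] at h
      rw [List.mem_range] at hj hj'
      have := congrArg ZMod.val h
      rwa [ZMod.val_cast_of_lt (by omega), ZMod.val_cast_of_lt (by omega)] at this
    have hne : s ≠ s + ((L-1:ℕ) : ZMod n) := by
      intro h
      have h0 : ((L-1 : ℕ) : ZMod n) = 0 := by
        have := h.symm
        rwa [add_eq_left] at this
      rw [ZMod.natCast_eq_zero_iff] at h0
      have := Nat.le_of_dvd (by omega) h0
      omega
    rw [show L - 1 + 1 = L by omega] at *
    refine List.Nodup.cons ?_ ?_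
    · intro hmem
      rcases List.mem_append.mp hmem with h | h
      · obtain ⟨j, _, hj⟩ := List.mem_map.mp h
        cases hj
      · rw [List.mem_singleton] at h
        exact hne (by injection h)
    · refine List.Nodup.append (List.nodup_range.map_on hinj) (List.nodup_singleton _) ?_
      intro z hz hz'
      obtain ⟨j, _, hj⟩ := List.mem_map.mp hz
      rw [List.mem_singleton] at hz'
      rw [← hj] at hz'
      cases hz'
  · rw [SimpleGraph.Walk.support_cons, SimpleGraph.Walk.support_concat, hw0,
      show L - 1 + 1 = L by omega]

private lemma mod2 {x N : ℕ} (h0 : 0 < N) (h : x < 2*N) :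
    x % N = if x < N then x else x - N := by
  split
  · exact Nat.mod_eq_of_lt ‹_›
  · rw [Nat.mod_eq_sub_mod (by omega), Nat.mod_eq_of_lt (by omega)]

/-- cycle index -/
private def cI (k m : ℕ) : ℕ := 2*m % (2*k+1)

private lemma cI_lt (k m : ℕ) : cI k m < 2*k+1 := Nat.mod_lt _ (by omega)

private lemma cI_le (k m : ℕ) (h : m ≤ k) : cI k m = 2*m := by
  unfold cI; rw [Nat.mod_eq_of_lt (by omega)]

private lemma cI_gt (k s : ℕ) (h : s < k) : cI k (k+1+s) = 2*s+1 := by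
  unfold cI
  rw [mod2 (by omega) (by omega)]
  split <;> omega

private lemma cI_sigma (k m : ℕ) : (cI k m + 2) % (2*k+1) = cI k (m+1) := by
  unfold cI
  rw [Nat.mod_add_mod]
  congr 1

private lemma intervalLen_eval (n k : ℕ) (a : ℕ → ℕ) (i : ℕ) (hn : 0 < n)
    (hi : a i < n) (hs : a ((i + 2) % (2 * k + 1)) < n) :
    intervalLen n k a i =
      if a i < a ((i + 2) % (2 * k + 1)) then a ((i + 2) % (2 * k + 1)) - a i
      else a ((i + 2) % (2 * k + 1)) + n - a i := by
  unfold intervalLen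
  set x := a ((i + 2) % (2 * k + 1))
  set y := a i
  split
  · rw [show x + n - y - 1 = n + (x - y - 1) by omega, Nat.add_mod_left,
      Nat.mod_eq_of_lt (by omega)]
    omega
  · rw [Nat.mod_eq_of_lt (by omega)]
    omega

private lemma consec (n k : ℕ) (a : ℕ → ℕ) (ha : GoodSeq n k a) (m : ℕ)
    (hm : m + 1 < 2*k+1) : a (cI k m) < a (cI k (m+1)) := by
  obtain ⟨h1, h2, h3, h4⟩ := ha
  rcases lt_trichotomy m k with h | h | h
  · rw [cI_le k m (by omega), cI_le k (m+1) (by omega)]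
    exact h2 m h
  · have e1 : cI k (k+1) = 1 := by
      have := cI_gt k 0 (by omega)
      simpa using this
    rw [h, cI_le k k le_rfl, e1]
    exact h3 (by omega)
  · obtain ⟨s, rfl⟩ : ∃ s, m = k+1+s := ⟨m - (k+1), by omega⟩
    rw [cI_gt k s (by omega), show k+1+s+1 = k+1+(s+1) by ring, cI_gt k (s+1) (by omega)]
    simpa [show 2*(s+1)+1 = 2*s+1+2 by ring] using h4 s (by omega)

private lemma mono0 (n k : ℕ) (a : ℕ → ℕ) (ha : GoodSeq n k a) (m : ℕ)
    (hm : m < 2*k+1) : a 0 ≤ a (cI k m) := by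
  induction m with
  | zero => simp [cI]
  | succ m ih =>
    have h1 := ih (by omega)
    have h2 := consec n k a ha m hm
    omega

private lemma len_eq (n k : ℕ) (a : ℕ → ℕ) (hn : 3 ≤ n) (ha : GoodSeq n k a) (m : ℕ)
    (hm : m + 1 < 2*k+1) :
    intervalLen n k a (cI k m) = a (cI k (m+1)) - a (cI k m) := by
  have hi : a (cI k m) < n := (ha.1 _ (by have := cI_lt k m; omega)).1
  have hs : a ((cI k m + 2) % (2*k+1)) < n := by
    rw [cI_sigma]
    exact (ha.1 _ (by have := cI_lt k (m+1); omega)).1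
  have h := intervalLen_eval n k a (cI k m) (by omega) hi hs
  rw [cI_sigma] at h
  rw [h, if_pos (consec n k a ha m hm)]

private lemma len_last (n k : ℕ) (a : ℕ → ℕ) (hn : 3 ≤ n) (ha : GoodSeq n k a) :
    intervalLen n k a (cI k (2*k)) = n + a 0 - a (cI k (2*k)) := by
  have hi : a (cI k (2*k)) < n := (ha.1 _ (by have := cI_lt k (2*k); omega)).1
  have hσ : (cI k (2*k) + 2) % (2*k+1) = 0 := by
    rw [cI_sigma]
    unfold cI
    rw [show 2*(2*k+1) = (2*k+1)*2 by ring, Nat.mul_mod_right]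
  have hs : a ((cI k (2*k) + 2) % (2*k+1)) < n := by
    rw [hσ]; exact (ha.1 0 (by omega)).1
  have h := intervalLen_eval n k a (cI k (2*k)) (by omega) hi hs
  rw [hσ] at h
  have hmono := mono0 n k a ha (2*k) (by omega)
  rw [h, if_neg (by omega)]
  omega

private lemma psum (n k : ℕ) (a : ℕ → ℕ) (hn : 3 ≤ n) (ha : GoodSeq n k a) :
    ∀ m ≤ 2*k+1, (∑ x ∈ Finset.range m, intervalLen n k a (cI k x)) + a 0 =
      if m = 2*k+1 then n + a 0 else a (cI k m) := by
  intro m hm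
  induction m with
  | zero =>
    rw [if_neg (by omega)]
    simp [cI]
  | succ m ih =>
    rw [Finset.sum_range_succ]
    have ihm := ih (by omega)
    rw [if_neg (by omega)] at ihm
    have hin : a (cI k m) < n := (ha.1 _ (by have := cI_lt k m; omega)).1
    by_cases hend : m + 1 = 2*k+1
    · rw [if_pos hend]
      have hm2k : m = 2*k := by omega
      have hl : intervalLen n k a (cI k m) = n + a 0 - a (cI k m) := by
        rw [hm2k]; exact len_last n k a hn ha
      have hmono := mono0 n k a ha m (by omega)
      omega
    · rw [if_neg hend]
      have hl := len_eq n k a hn ha m (by omega)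
      have hc := consec n k a ha m (by omega)
      omega

private lemma len_pos (n k : ℕ) (a : ℕ → ℕ) (i : ℕ) : 1 ≤ intervalLen n k a i := by
  unfold intervalLen; omega

private lemma len_ge_two (n k : ℕ) (a : ℕ → ℕ) (hn : 3 ≤ n) (hdvd : (2*k+1) ∣ n)
    (ha : GoodSeq n k a) : ∀ m < 2*k+1, 2 ≤ intervalLen n k a (cI k m) := by
  intro m hm
  rcases Nat.eq_zero_or_pos k with hk | hk
  · have hm0 : m = 0 := by omega
    subst hm0 hk
    have h := psum n 0 a hn ha 1 (by omega)
    rw [if_pos (by omega), Finset.sum_range_one] at h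
    omega
  · set N := 2*k+1 with hN
    have hres : ∀ i < N, a i % N = i := fun i hi => by
      rw [(ha.1 i (by omega)).2, Nat.mod_eq_of_lt hi]
    have hres' : a (cI k m) % N = cI k m := hres _ (cI_lt k m)
    by_contra hcon
    have hL1 : intervalLen n k a (cI k m) = 1 := by
      have := len_pos n k a (cI k m)
      omega
    by_cases hend : m + 1 = N
    · have hm2k : m = 2*k := by omega
      have hl := len_last n k a hn ha
      rw [← hm2k] at hl
      have hmono := mono0 n k a ha m (by omega)
      have hin : a (cI k m) < n := (ha.1 _ (by have := cI_lt k m; omega)).1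
      have heq : 1 + a (cI k m) = n + a 0 := by omega
      -- take mod N
      obtain ⟨q, hq⟩ := hdvd
      have h0 : a 0 % N = 0 := by
        have := hres 0 (by omega); simpa using this
      have hmodL : (1 + a (cI k m)) % N = (1 + cI k m) % N := by
        rw [Nat.add_mod, hres', Nat.mod_eq_of_lt (show 1 < N by omega)]
      have hmodR : (n + a 0) % N = 0 := by
        rw [Nat.add_mod, h0, hq, Nat.mul_mod_right]
        simp
      have hc : (1 + cI k m) % N = 0 := by rw [← hmodL, heq, hmodR]
      have hlt := cI_lt k m
      have : 1 + cI k m = N := by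
        rcases Nat.lt_or_ge (1 + cI k m) N with h | h
        · rw [Nat.mod_eq_of_lt h] at hc; omega
        · rw [mod2 (by omega) (by omega)] at hc
          split at hc <;> omega
      -- so cI k m = 2*k, but cI k (2*k) = 2*k-1
      have : cI k m = 2*k := by omega
      have hv : cI k (2*k) = 2*(k-1)+1 := by
        have := cI_gt k (k-1) (by omega)
        rw [show k+1+(k-1) = 2*k by omega] at this
        exact this
      rw [hm2k] at this
      omega
    · have hl := len_eq n k a hn ha m (by omega)
      have hc := consec n k a ha m (by omega)
      have heq : 1 + a (cI k m) = a (cI k (m+1)) := by omega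
      have hres2 : a (cI k (m+1)) % N = cI k (m+1) := hres _ (cI_lt k (m+1))
      have haux : (1 + a (cI k m)) % N = (1 + cI k m) % N := by
        rw [Nat.add_mod, hres', Nat.mod_eq_of_lt (show 1 < N by omega)]
      have hkey : (1 + cI k m) % N = cI k (m+1) := by
        rw [← hres2, ← heq, haux]
      -- cI k m = 2m % N, cI k (m+1) = (2m+2) % N
      have e1 : (1 + cI k m) % N = (2*m+1) % N := by
        unfold cI
        rw [Nat.add_mod_mod, Nat.add_comm]
      have e2 : cI k (m+1) = (2*m+2) % N := by
        unfold cI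
        congr 1
      rw [e1, e2] at hkey
      rw [mod2 (show 0 < N by omega) (by omega), mod2 (show 0 < N by omega) (by omega)] at hkey
      split at hkey <;> split at hkey <;> omega

private lemma cast_next (n k : ℕ) (a : ℕ → ℕ) (hn : 3 ≤ n) (ha : GoodSeq n k a)
    (m : ℕ) (hm : m < 2*k+1) :
    (a ((cI k m + 2) % (2*k+1)) : ZMod n) =
      (a (cI k m) : ZMod n) + (intervalLen n k a (cI k m) : ZMod n) := by
  rw [cI_sigma]
  have hin : a (cI k m) < n := (ha.1 _ (by have := cI_lt k m; omega)).1
  by_cases hend : m + 1 = 2*k+1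
  · have hm2k : m = 2*k := by omega
    have hl := len_last n k a hn ha
    rw [← hm2k] at hl
    have hmono := mono0 n k a ha m (by omega)
    have heq : a (cI k m) + intervalLen n k a (cI k m) = n + a 0 := by omega
    have h0 : cI k (m+1) = 0 := by
      unfold cI
      rw [hend, show 2*(2*k+1) = (2*k+1)*2 by ring, Nat.mul_mod_right]
    rw [h0]
    have := congrArg (fun z : ℕ => (z : ZMod n)) heq
    push_cast at this
    rw [ZMod.natCast_self] at this
    rw [this]
    ring
  · have hl := len_eq n k a hn ha m (by omega)
    have hc := consec n k a ha m (by omega)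
    have heq : a (cI k m) + intervalLen n k a (cI k m) = a (cI k (m+1)) := by omega
    have := congrArg (fun z : ℕ => (z : ZMod n)) heq
    push_cast at this
    rw [← this]

private lemma cI_surj (k i : ℕ) (hi : i < 2*k+1) :
    ∃ m < 2*k+1, cI k m = i := by
  refine ⟨(k+1)*i % (2*k+1), Nat.mod_lt _ (by omega), ?_⟩
  unfold cI
  have h1 : 2*((k+1)*i % (2*k+1)) % (2*k+1) = 2*((k+1)*i) % (2*k+1) :=
    Nat.ModEq.mul_left 2 (Nat.mod_modEq _ _)
  rw [h1, show 2*((k+1)*i) = i + (2*k+1)*i by ring, Nat.add_mul_mod_self_left,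
    Nat.mod_eq_of_lt hi]

private lemma find_interval (f : ℕ → ℕ) : ∀ M c, f 0 ≤ c → c < f M →
    ∃ m < M, f m ≤ c ∧ c < f (m+1) := by
  intro M
  induction M with
  | zero => intro c h0 hM; omega
  | succ M ih =>
    intro c h0 hM
    by_cases h : c < f M
    · obtain ⟨m, hm, h1, h2⟩ := ih c h0 h
      exact ⟨m, by omega, h1, h2⟩
    · exact ⟨M, by omega, by omega, hM⟩

private lemma list_norm (n : ℕ) (s : ZMod n) (L : ℕ) :
    (List.range L).map (fun j => DPVert.y (s + (j : ZMod n))) =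
    (List.range L).map (fun j : ℕ => DPVert.y (s + (j : ZMod n))) := by
  simp only [bind_pure_comp, List.map_eq_map, List.map_map]
  rfl

theorem Q_paths_cover_y (n t k : ℕ) (hn : 3 ≤ n) (ht : 2 ≤ 2 * t) (htn : 2 * t < n)
    (hodd : Odd n) (hgcd : Nat.gcd n t = 2 * k + 1) (a : ℕ → ℕ) (ha : GoodSeq n k a) :
    (∀ i < 2 * k + 1,
      ∃ w : (DP n t).Walk (DPVert.v (a i))
          (DPVert.v ((a ((i + 2) % (2 * k + 1)) : ZMod n) - 1)),
        w.IsPath ∧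
        w.support =
          DPVert.v (a i) ::
            ((List.range (intervalLen n k a i)).map
              (fun j => DPVert.y ((a i : ZMod n) + (j : ZMod n))) ++
             [DPVert.v ((a ((i + 2) % (2 * k + 1)) : ZMod n) - 1)])) ∧
    (Set.Iio (2 * k + 1)).Pairwise (fun i i' : ℕ =>
      Disjoint
        ((fun j : ℕ => DPVert.y ((a i : ZMod n) + (j : ZMod n))) ''
          Set.Iio (intervalLen n k a i))
        ((fun j : ℕ => DPVert.y ((a i' : ZMod n) + (j : ZMod n))) ''
          Set.Iio (intervalLen n k a i'))) ∧
    (⋃ i ∈ Set.Iio (2 * k + 1),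
        (fun j : ℕ => DPVert.y ((a i : ZMod n) + (j : ZMod n))) ''
          Set.Iio (intervalLen n k a i))
      = {w : DPVert n | ∃ m, w = DPVert.y m} := by
  haveI : NeZero n := ⟨by omega⟩
  have hdvd : (2*k+1) ∣ n := hgcd ▸ Nat.gcd_dvd_left n t
  set P : ℕ → ℕ := fun m => ∑ x ∈ Finset.range m, intervalLen n k a (cI k x) with hPdef
  have hP := psum n k a hn ha
  have hPN : P (2*k+1) = n := by
    have := hP (2*k+1) le_rfl
    rw [if_pos rfl] at this
    exact Nat.add_right_cancel this
  have hPa : ∀ m < 2*k+1, P m + a 0 = a (cI k m) := fun m hm => by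
    have := hP m (le_of_lt hm)
    rw [if_neg (by omega)] at this
    exact this
  have hPsucc : ∀ m, P (m+1) = P m + intervalLen n k a (cI k m) :=
    fun m => Finset.sum_range_succ _ m
  have hPmono : ∀ {m m' : ℕ}, m ≤ m' → P m ≤ P m' := fun h =>
    Finset.sum_le_sum_of_subset (Finset.range_subset_range.mpr h)
  have hLn : ∀ m < 2*k+1, intervalLen n k a (cI k m) ≤ n := by
    intro m hm
    have h1 := hPsucc m
    have h2 := hPmono (show m+1 ≤ 2*k+1 by omega)
    rw [hPN] at h2
    omega
  refine ⟨?_, ?_, ?_⟩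
  · -- paths
    intro i hi
    obtain ⟨m, hm, rfl⟩ := cI_surj k i hi
    have hL2 := len_ge_two n k a hn hdvd ha m hm
    set L := intervalLen n k a (cI k m) with hLdef
    obtain ⟨w, hpath, hsupp⟩ := vPath n t hn ((a (cI k m) : ZMod n)) L hL2 (hLn m hm)
    have hend : (a (cI k m) : ZMod n) + ((L-1 : ℕ) : ZMod n) =
        (a ((cI k m + 2) % (2*k+1)) : ZMod n) - 1 := by
      rw [cast_next n k a hn ha m hm, Nat.cast_sub (show 1 ≤ L by omega)]
      push_cast
      ring
    refine ⟨w.copy rfl (by rw [hend]), ?_, ?_⟩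
    · rwa [SimpleGraph.Walk.isPath_copy]
    · rw [SimpleGraph.Walk.support_copy, hsupp, list_norm, hend]
  · -- pairwise disjoint
    intro i hi i' hi' hne
    simp only [Set.mem_Iio] at hi hi'
    obtain ⟨m, hm, rfl⟩ := cI_surj k i hi
    obtain ⟨m', hm', rfl⟩ := cI_surj k i' hi'
    rw [Set.disjoint_left]
    rintro z ⟨j, hj, rfl⟩ ⟨j', hj', hyy⟩
    simp only [Set.mem_Iio] at hj hj'
    simp only [DPVert.y.injEq] at hyy
    have e1 : a (cI k m) + j = a 0 + (P m + j) := by have := hPa m hm; omega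
    have e2 : a (cI k m') + j' = a 0 + (P m' + j') := by have := hPa m' hm'; omega
    have hcast : ((P m' + j' : ℕ) : ZMod n) = ((P m + j : ℕ) : ZMod n) := by
      have c1 : ((a (cI k m) + j : ℕ) : ZMod n) = ((a (cI k m') + j' : ℕ) : ZMod n) := by
        push_cast
        rw [hyy]
      rw [e1, e2] at c1
      push_cast at c1 ⊢
      exact (add_left_cancel c1).symm
    have hb : P m + j < n := by
      have := hPsucc m
      have h2 := hPmono (show m+1 ≤ 2*k+1 by omega)
      rw [hPN] at h2
      omega
    have hb' : P m' + j' < n := by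
      have := hPsucc m'
      have h2 := hPmono (show m'+1 ≤ 2*k+1 by omega)
      rw [hPN] at h2
      omega
    have hnat : P m' + j' = P m + j := by
      have := congrArg ZMod.val hcast
      rwa [ZMod.val_cast_of_lt hb', ZMod.val_cast_of_lt hb] at this
    have hmm : m ≠ m' := fun h => hne (by rw [h])
    rcases Nat.lt_or_ge m m' with h | h
    · have := hPmono (show m+1 ≤ m' by omega)
      have := hPsucc m
      omega
    · have := hPmono (show m'+1 ≤ m by omega)
      have := hPsucc m'
      omega
  · -- cover
    ext z
    simp only [Set.mem_iUnion, Set.mem_image, Set.mem_Iio, Set.mem_setOf_eq]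
    constructor
    · rintro ⟨i, hi, j, hj, rfl⟩
      exact ⟨_, rfl⟩
    · rintro ⟨mz, rfl⟩
      have hc : (mz - (a 0 : ZMod n)).val < P (2*k+1) := by
        rw [hPN]; exact ZMod.val_lt _
      obtain ⟨m, hm, hle, hlt⟩ := find_interval P (2*k+1) _ (by simp [hPdef]) hc
      refine ⟨cI k m, cI_lt k m, (mz - (a 0 : ZMod n)).val - P m, ?_, ?_⟩
      · have := hPsucc m
        omega
      · have e1 : a (cI k m) + ((mz - (a 0 : ZMod n)).val - P m)
            = a 0 + (mz - (a 0 : ZMod n)).val := by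
          have := hPa m hm
          omega
        have := congrArg (fun z : ℕ => (z : ZMod n)) e1
        push_cast at this
        rw [this]
        simp [ZMod.natCast_val, ZMod.cast_id]
end

section
/- Let n be odd, 2k+1 = gcd(n, t), n = p(2k+1). For each i ∈ ℤ_{2k+1}, the paths R_i : u_{a_{i+1}+t−1} v_{a_{i+1}+2t−1} u_{a_{i+1}+3t−1} ... v_{a_i} and S_i : v_{a_{i+1}−1} u_{a_{i+1}−t−1} v_{a_{i+1}−2t−1} ... u_{a_i+t} are vertex-disjoint subpaths of the cycle C_{i'} (where i' ≡ a_i + t mod 2k+1), and together they contain every vertex of C_{i'}. -/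
/-- zigzag vertex: alternating u/v in position arithmetic progression. -/
def zvAux (n : ℕ) (c d : ZMod n) (b j : ℕ) : DPVert n :=
  if (j + b) % 2 = 0 then DPVert.u (c + (j : ZMod n) * d) else DPVert.v (c + (j : ZMod n) * d)

lemma zvAux_adj (n t : ℕ) (c d : ZMod n) (b j : ℕ)
    (hd : d = (t : ZMod n) ∨ d = -(t : ZMod n)) :
    (DP n t).Adj (zvAux n c d b j) (zvAux n c d b (j + 1)) := by
  unfold zvAux
  have h2 : (j + 1 + b) % 2 = 1 - (j + b) % 2 := by omega
  rcases Nat.even_or_odd (j + b) with hpar | hpar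
  · have h0 : (j + b) % 2 = 0 := Nat.even_iff.mp hpar
    rw [h0, h2, h0]
    simp only [if_pos rfl]
    norm_num
    rw [DP, SimpleGraph.fromRel_adj]
    constructor
    · simp
    · rcases hd with rfl | rfl
      · left; refine Or.inr (Or.inr (Or.inr (Or.inr (Or.inl ⟨c + (j:ZMod n) * t, rfl, ?_⟩))))
        push_cast; ring
      · right; refine Or.inr (Or.inr (Or.inr (Or.inr (Or.inr ⟨c + ((j:ZMod n)+1) * (-(t:ZMod n)), rfl, ?_⟩))))
        push_cast; ring
  · have h0 : (j + b) % 2 = 1 := Nat.odd_iff.mp hpar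
    rw [h0, h2, h0]
    norm_num
    rw [DP, SimpleGraph.fromRel_adj]
    constructor
    · simp
    · rcases hd with rfl | rfl
      · left; refine Or.inr (Or.inr (Or.inr (Or.inr (Or.inr ⟨c + (j:ZMod n) * t, rfl, ?_⟩))))
        push_cast; ring
      · right; refine Or.inr (Or.inr (Or.inr (Or.inr (Or.inl ⟨c + ((j:ZMod n)+1) * (-(t:ZMod n)), rfl, ?_⟩))))
        push_cast; ring

def zwalk (n t : ℕ) (c d : ZMod n) (b : ℕ)
    (hd : d = (t : ZMod n) ∨ d = -(t : ZMod n)) :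
    (m : ℕ) → (DP n t).Walk (zvAux n c d b 0) (zvAux n c d b m)
  | 0 => SimpleGraph.Walk.nil
  | m + 1 => (zwalk n t c d b hd m).concat (zvAux_adj n t c d b m hd)

lemma zwalk_support (n t : ℕ) (c d : ZMod n) (b : ℕ)
    (hd : d = (t : ZMod n) ∨ d = -(t : ZMod n)) (m : ℕ) :
    (zwalk n t c d b hd m).support = (List.range (m + 1)).map (zvAux n c d b) := by
  induction m with
  | zero => simp [zwalk, List.range_succ]
  | succ m ih =>
      rw [zwalk, SimpleGraph.Walk.support_concat, ih]
      conv_rhs => rw [List.range_succ]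
      simp

lemma zvAux_eq {n : ℕ} {c d : ZMod n} {b j j' : ℕ}
    (h : zvAux n c d b j = zvAux n c d b j') :
    (j + b) % 2 = (j' + b) % 2 ∧ (j : ZMod n) * d = (j' : ZMod n) * d := by
  unfold zvAux at h
  by_cases h1 : (j + b) % 2 = 0 <;> by_cases h2 : (j' + b) % 2 = 0
  · rw [if_pos h1, if_pos h2] at h
    injection h with h
    exact ⟨by omega, by rwa [add_right_inj] at h⟩
  · rw [if_pos h1, if_neg h2] at h
    exact (nomatch h)
  · rw [if_neg h1, if_pos h2] at h
    exact (nomatch h)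
  · rw [if_neg h1, if_neg h2] at h
    injection h with h
    exact ⟨by omega, by rwa [add_right_inj] at h⟩

section NT
variable {n t p g t' : ℕ}

lemma castMul_eq_zero_iff (hg : 0 < g) (hn : n = p * g) (ht : t = t' * g)
    (hco : Nat.Coprime p t') (hn0 : n ≠ 0) (j : ℕ) :
    ((j * t : ℕ) : ZMod n) = 0 ↔ p ∣ j := by
  haveI : NeZero n := ⟨hn0⟩
  rw [ZMod.natCast_eq_zero_iff]
  subst hn ht
  rw [show j * (t' * g) = j * t' * g by ring, Nat.mul_dvd_mul_iff_right hg]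
  constructor
  · exact fun h => hco.dvd_of_dvd_mul_right h
  · exact fun h => Dvd.dvd.mul_right h t'

lemma key2 (hg : 0 < g) (hn : n = p * g) (ht : t = t' * g)
    (hco : Nat.Coprime p t') (hn0 : n ≠ 0) (hpodd : Odd p)
    {j j' : ℕ} (hj : j < 2 * p) (hj' : j' < 2 * p) (hpar : j % 2 = j' % 2)
    (heq : ((j * t : ℕ) : ZMod n) = ((j' * t : ℕ) : ZMod n)) : j = j' := by
  have main : ∀ x y : ℕ, y ≤ x → x < 2 * p → x % 2 = y % 2 →
      ((x * t : ℕ) : ZMod n) = ((y * t : ℕ) : ZMod n) → x = y := by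
    intro x y hyx hx hparxy heqxy
    have hsub : (((x - y) * t : ℕ) : ZMod n) = 0 := by
      have : ((x - y) * t : ℕ) = x * t - y * t := by
        rw [Nat.sub_mul]
      rw [this, Nat.cast_sub (Nat.mul_le_mul_right t hyx), heqxy, sub_self]
    have hpd : p ∣ x - y := (castMul_eq_zero_iff hg hn ht hco hn0 _).mp hsub
    have h2d : 2 ∣ x - y := by omega
    have hco2 : Nat.Coprime 2 p := Nat.coprime_two_left.mpr hpodd
    have hdvd2p : 2 * p ∣ x - y := Nat.Coprime.mul_dvd_of_dvd_of_dvd hco2 h2d hpd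
    have hlt : x - y < 2 * p := by omega
    have := Nat.eq_zero_of_dvd_of_lt hdvd2p hlt
    omega
  rcases le_total j' j with h | h
  · exact main j j' h hj hpar heq
  · exact (main j' j h hj' hpar.symm heq.symm).symm

lemma solveNT (hg : 0 < g) (hn : n = p * g) (ht : t = t' * g)
    (hco : Nat.Coprime p t') (hp0 : 0 < p)
    (d : ℕ) (hd : g ∣ d) : ∃ m, m < p ∧ ((m * t : ℕ) : ZMod n) = (d : ZMod n) := by
  haveI : NeZero p := ⟨by omega⟩
  -- inverse of t' mod p
  have hco' : Nat.Coprime t' p := (Nat.coprime_comm.mp hco)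
  obtain ⟨e, he⟩ : ∃ e : ℕ, t' * e ≡ 1 [MOD p] := by
    refine ⟨((t' : ZMod p)⁻¹).val, ?_⟩
    have := ZMod.coe_mul_inv_eq_one t' hco'
    rw [← ZMod.natCast_eq_natCast_iff]
    push_cast
    rwa [ZMod.natCast_val, ZMod.cast_id]
  refine ⟨(d / g * e) % p, Nat.mod_lt _ hp0, ?_⟩
  rw [ZMod.natCast_eq_natCast_iff]
  have h1 : (d / g * e) % p * t' ≡ d / g [MOD p] := by
    calc (d / g * e) % p * t' ≡ d / g * e * t' [MOD p] :=
          Nat.ModEq.mul_right _ (Nat.mod_modEq _ p)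
      _ = d / g * (t' * e) := by ring
      _ ≡ d / g * 1 [MOD p] := Nat.ModEq.mul_left _ he
      _ = d / g := by ring
  have h2 := Nat.ModEq.mul_right' (c := g) h1
  rw [Nat.div_mul_cancel hd] at h2
  subst hn ht
  calc (d / g * e) % p * (t' * g) = (d / g * e) % p * t' * g := by ring
    _ ≡ d [MOD p * g] := h2

end NT

/-- Vertex list of the path `R_i : u_{a_{i+1}+t-1} v_{a_{i+1}+2t-1} … ` with `r+1` vertices. -/
def Rlist (n t k : ℕ) (a : ℕ → ℕ) (i r : ℕ) : List (DPVert n) :=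
  (List.range (r + 1)).map (fun j =>
    if Even j then
      DPVert.u ((a ((i + 1) % (2 * k + 1)) : ZMod n) - 1 + (((j + 1) * t : ℕ) : ZMod n))
    else
      DPVert.v ((a ((i + 1) % (2 * k + 1)) : ZMod n) - 1 + (((j + 1) * t : ℕ) : ZMod n)))

/-- Vertex list of the path `S_i : v_{a_{i+1}-1} u_{a_{i+1}-t-1} … ` with `s+1` vertices. -/
def Slist (n t k : ℕ) (a : ℕ → ℕ) (i s : ℕ) : List (DPVert n) :=
  (List.range (s + 1)).map (fun j =>
    if Even j then
      DPVert.v ((a ((i + 1) % (2 * k + 1)) : ZMod n) - 1 - ((j * t : ℕ) : ZMod n))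
    else
      DPVert.u ((a ((i + 1) % (2 * k + 1)) : ZMod n) - 1 - ((j * t : ℕ) : ZMod n)))

/-- `R_i` ends at `v_{a_i}` and `S_i` ends at `u_{a_i + t}` (both have odd length). -/
def RSEnds (n t k : ℕ) (a : ℕ → ℕ) (i r s : ℕ) : Prop :=
  Odd r ∧ (a ((i + 1) % (2 * k + 1)) : ZMod n) - 1 + (((r + 1) * t : ℕ) : ZMod n) = (a i : ZMod n) ∧
  Odd s ∧ (a ((i + 1) % (2 * k + 1)) : ZMod n) - 1 - ((s * t : ℕ) : ZMod n) = (a i : ZMod n) + (t : ZMod n)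


theorem R_S_split_cycle (n t k p : ℕ) (hn : 3 ≤ n) (ht : 2 ≤ 2 * t) (htn : 2 * t < n)
    (hodd : Odd n) (hgcd : Nat.gcd n t = 2 * k + 1) (hp : n = p * (2 * k + 1))
    (a : ℕ → ℕ) (ha : GoodSeq n k a) :
    ∀ i < 2 * k + 1, ∃ r s : ℕ, RSEnds n t k a i r s ∧
      ∃ (R : (DP n t).Walk
            (DPVert.u ((a ((i + 1) % (2 * k + 1)) : ZMod n) - 1 + (t : ZMod n)))
            (DPVert.v (a i)))
        (S : (DP n t).Walk
            (DPVert.v ((a ((i + 1) % (2 * k + 1)) : ZMod n) - 1))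
            (DPVert.u ((a i : ZMod n) + (t : ZMod n)))),
        R.IsPath ∧ S.IsPath ∧
        R.support = Rlist n t k a i r ∧ S.support = Slist n t k a i s ∧
        R.support.Disjoint S.support ∧
        ∀ w : DPVert n,
          (w ∈ R.support ∨ w ∈ S.support) ↔
            ∃ m : ZMod n, (w = DPVert.u m ∨ w = DPVert.v m) ∧
              m.val % (2 * k + 1) = (a i + t) % (2 * k + 1) := by
  intro i hi
  obtain ⟨ha1, ha2, ha3, ha4⟩ := ha
  set g : ℕ := 2 * k + 1 with hgdef
  have hg0 : 0 < g := by omega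
  have hn0 : n ≠ 0 := by omega
  haveI : NeZero n := ⟨hn0⟩
  have ht1 : 1 ≤ t := by omega
  have hgt : g ∣ t := hgcd ▸ Nat.gcd_dvd_right n t
  have hgn : g ∣ n := hgcd ▸ Nat.gcd_dvd_left n t
  obtain ⟨t'', ht''⟩ : ∃ t'', t = g * t'' := hgt
  have htt : t = t'' * g := by rw [ht'', Nat.mul_comm]
  have hco : Nat.Coprime p t'' := by
    have h1 : Nat.gcd p t'' * g = 1 * g := by
      rw [← Nat.gcd_mul_right, ← hp, ← htt, hgcd, one_mul]
    exact Nat.eq_of_mul_eq_mul_right hg0 h1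
  have hp2 : 2 ≤ p := by
    rcases Nat.lt_or_ge p 2 with h | h
    · interval_cases p
      · omega
      · have : g ≤ t := Nat.le_of_dvd (by omega) ⟨t'', ht''⟩
        omega
    · exact h
  have hpodd : Odd p := by
    rw [hp] at hodd
    exact (Nat.Odd.of_mul_left hodd)
  set A : ℕ := a ((i + 1) % g) with hAdef
  have hilt : i ≤ 2 * k := by omega
  have hIlt : (i + 1) % g ≤ 2 * k := by
    have := Nat.mod_lt (i+1) hg0
    omega
  have hA := ha1 _ hIlt
  have hAmod : A % g = (i + 1) % g := by
    rw [hA.2, Nat.mod_mod_of_dvd _ (dvd_refl g)]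
  have hAn : A < n := hA.1
  have hai := ha1 i hilt
  have hain : a i < n := hai.1
  have haimod : a i % g = i % g := hai.2
  -- chain lemmas
  have evch0 : ∀ d j' : ℕ, j' + d ≤ k → a (2 * j') ≤ a (2 * (j' + d)) := by
    intro d
    induction d with
    | zero => intro j' _; simp
    | succ m ih =>
        intro j' h
        have h1 := ih j' (by omega)
        have h2 := ha2 (j' + m) (by omega)
        have e : 2 * (j' + (m + 1)) = 2 * (j' + m) + 2 := by ring
        rw [e]
        omega
  have evch : ∀ j j' : ℕ, j ≤ j' → j' ≤ k → a (2 * j) ≤ a (2 * j') := by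
    intro j j' h1 h2
    have h3 := evch0 (j' - j) j (by omega)
    have e : j + (j' - j) = j' := by omega
    rw [e] at h3
    exact h3
  have odch : ∀ j : ℕ, j < k → a 1 ≤ a (2 * j + 1) := by
    intro j
    induction j with
    | zero => intro _; exact le_rfl
    | succ m ih =>
        intro h
        have h1 : a (2 * m + 1) < a (2 * m + 3) := ha4 m (by omega)
        have h2 : a 1 ≤ a (2 * m + 1) := ih (by omega)
        have e : 2 * (m + 1) + 1 = 2 * m + 3 := by ring
        rw [e]
        omega
  -- combinatorial claims
  have claim1 : a i + 1 ≠ A := by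
    rcases Nat.even_or_odd i with ⟨j, hj⟩ | ⟨j, hj⟩
    · -- i = 2j even
      rcases Nat.eq_or_lt_of_le hilt with h | h
      · -- i = 2k
        have hA0 : A = a 0 := by
          rw [hAdef]
          have e : i + 1 = g := by omega
          rw [e, Nat.mod_self]
        rcases Nat.eq_zero_or_pos k with hk | hk
        · subst hk
          rw [hA0, h, Nat.mul_zero]
          omega
        · have : a 0 ≤ a (2 * k) := evch 0 k (by omega) le_rfl
          rw [hA0, h]
          omega
      · -- i = 2j < 2k, so j < k
        have hjk : j < k := by omega
        have hA1 : A = a (2 * j + 1) := by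
          rw [hAdef]
          congr 1
          rw [Nat.mod_eq_of_lt (by omega)]
          omega
        have h1 : a (2 * j) < a (2 * j + 2) := ha2 j hjk
        have h2 : a (2 * j + 2) ≤ a (2 * k) := by
          have h5 := evch (j + 1) k (by omega) le_rfl
          have e : 2 * (j + 1) = 2 * j + 2 := by ring
          rw [e] at h5
          exact h5
        have h3 : a (2 * k) < a 1 := ha3 (by omega)
        have h4 : a 1 ≤ a (2 * j + 1) := odch j hjk
        rw [hA1, show i = 2 * j from by omega]
        omega
    · -- i = 2j+1 odd, i < 2k so 2j+1 ≤ 2k-1, j+1 ≤ k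
      have hjk : j + 1 ≤ k := by omega
      have hA1 : A = a (2 * j + 2) := by
        rw [hAdef]
        congr 1
        rw [Nat.mod_eq_of_lt (by omega)]
        omega
      have h2 : a (2 * j + 2) ≤ a (2 * k) := by
        have h5 := evch (j + 1) k hjk le_rfl
        have e : 2 * (j + 1) = 2 * j + 2 := by ring
        rw [e] at h5
        exact h5
      have h3 : a (2 * k) < a 1 := ha3 (by omega)
      have h4 : a 1 ≤ a (2 * j + 1) := odch j (by omega)
      rw [hA1, hj]
      omega
  have claim2 : ¬(a i = n - 1 ∧ A = 0) := by
    rintro ⟨hani, hA0⟩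
    have hmod0 : (i + 1) % g = 0 := by
      rw [hA0] at hAmod
      rw [← hAmod, Nat.zero_mod]
    have hdvd : g ∣ i + 1 := Nat.dvd_of_mod_eq_zero hmod0
    have hle : g ≤ i + 1 := Nat.le_of_dvd (by omega) hdvd
    have hi2k : i = 2 * k := by omega
    rcases Nat.eq_zero_or_pos k with hk | hk
    · rw [hmod0] at hAdef
      have hi0 : i = 0 := by omega
      rw [hi0] at hani
      omega
    · have h3 : a (2 * k) < a 1 := ha3 hk
      have h6 := ha1 1 (by omega)
      rw [hi2k] at hani
      omega
  -- the target value D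
  set D : ℕ := a i + n + 1 - A with hDdef
  have hAle : A ≤ a i + n + 1 := by omega
  have hModAi : A ≡ i + 1 [MOD g] := hAmod
  have hModai : a i ≡ i [MOD g] := haimod
  have hModn : n ≡ 0 [MOD g] := (Nat.modEq_zero_iff_dvd).mpr hgn
  have hModt : t ≡ 0 [MOD g] := (Nat.modEq_zero_iff_dvd).mpr ⟨t'', ht''⟩
  have hDg : g ∣ D := by
    have h1 : a i + n + 1 ≡ i + 1 [MOD g] := by
      have h0 := (hModai.add hModn).add_right 1
      simpa using h0
    have h2 : D + A = a i + n + 1 := by omega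
    have h3 : D + A ≡ 0 + A [MOD g] := by
      rw [h2, Nat.zero_add]
      exact h1.trans hModAi.symm
    have h4 : D ≡ 0 [MOD g] := Nat.ModEq.add_right_cancel' A h3
    exact (Nat.modEq_zero_iff_dvd).mp h4
  have hDpos : 0 < D := by omega
  have hDle : D ≤ 2 * n := by omega
  have hDn : D ≠ n := by
    intro h
    exact claim1 (by omega)
  have hD2n : D ≠ 2 * n := by
    intro h
    exact claim2 (by omega)
  have hDnd : ¬ (n ∣ D) := by
    intro hdvd
    obtain ⟨c, hc⟩ := hdvd
    have hc1 : 1 ≤ c := by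
      rcases Nat.eq_zero_or_pos c with h | h
      · rw [h, Nat.mul_zero] at hc
        omega
      · exact h
    have hc2 : c ≤ 2 := by
      by_contra h
      push_neg at h
      have h9 : n * 3 ≤ n * c := Nat.mul_le_mul_left n (by omega)
      rw [← hc] at h9
      omega
    interval_cases c <;> omega
  -- solve for m0
  obtain ⟨m0, hm0p, hm0⟩ := solveNT hg0 hp htt hco (by omega) D hDg
  have hm0ne : m0 ≠ 0 := by
    rintro rfl
    rw [Nat.zero_mul, Nat.cast_zero] at hm0
    exact hDnd ((ZMod.natCast_eq_zero_iff D n).mp hm0.symm)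
  -- define M
  set M : ℕ := if m0 % 2 = 0 then m0 else m0 + p with hMdef
  have hpm2 : p % 2 = 1 := Nat.odd_iff.mp hpodd
  have hMeven : M % 2 = 0 := by
    rw [hMdef]
    split <;> omega
  have hM2 : 2 ≤ M := by
    rw [hMdef]
    split <;> omega
  have hMle : M ≤ 2 * p - 2 := by
    rw [hMdef]
    split <;> omega
  have hMt : ((M * t : ℕ) : ZMod n) = (D : ZMod n) := by
    rw [hMdef]
    split
    · exact hm0
    · have h1 : (m0 + p) * t = m0 * t + p * t := by ring
      rw [h1, Nat.cast_add, hm0]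
      have h2 : ((p * t : ℕ) : ZMod n) = 0 :=
        (castMul_eq_zero_iff hg0 hp htt hco hn0 p).mpr (dvd_refl p)
      rw [h2, add_zero]
  clear hm0 hm0ne hm0p
  -- r and s
  set r : ℕ := M - 1 with hrdef
  set s : ℕ := 2 * p - M - 1 with hsdef
  have hr1 : r + 1 = M := by omega
  have hs1 : s + 1 = 2 * p - M := by omega
  have hrodd : Odd r := by rw [Nat.odd_iff]; omega
  have hsodd : Odd s := by rw [Nat.odd_iff]; omega
  have hrs : r + 1 + (s + 1) = 2 * p := by omega
  -- cast of D
  have hDcast : (D : ZMod n) = (a i : ZMod n) + 1 - (A : ZMod n) := by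
    rw [hDdef, Nat.cast_sub hAle]
    push_cast
    rw [ZMod.natCast_self]
    ring
  have h2pt : ((2 * p * t : ℕ) : ZMod n) = 0 :=
    (castMul_eq_zero_iff hg0 hp htt hco hn0 (2 * p)).mpr ⟨2, by ring⟩
  have hend1 : (A : ZMod n) - 1 + (((r + 1) * t : ℕ) : ZMod n) = (a i : ZMod n) := by
    rw [hr1, hMt, hDcast]
    ring
  have hMt1 : (((M + 1) * t : ℕ) : ZMod n) = (D : ZMod n) + (t : ZMod n) := by
    have : (M + 1) * t = M * t + t := by ring
    rw [this, Nat.cast_add, hMt]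
  have hst : ((s * t : ℕ) : ZMod n) = -((D : ZMod n) + (t : ZMod n)) := by
    have h1 : s * t + (M + 1) * t = 2 * p * t := by
      have : s + (M + 1) = 2 * p := by omega
      calc s * t + (M + 1) * t = (s + (M + 1)) * t := by ring
        _ = 2 * p * t := by rw [this]
    have h2 : ((s * t : ℕ) : ZMod n) + (((M + 1) * t : ℕ) : ZMod n) = 0 := by
      rw [← Nat.cast_add, h1, h2pt]
    rw [hMt1] at h2
    linear_combination h2
  have hend2 : (A : ZMod n) - 1 - ((s * t : ℕ) : ZMod n)
      = (a i : ZMod n) + (t : ZMod n) := by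
    rw [hst, hDcast]
    ring
  -- positions
  set c1 : ZMod n := (A : ZMod n) - 1 + (t : ZMod n) with hc1def
  set c2 : ZMod n := (A : ZMod n) - 1 with hc2def
  have hc12 : c1 = c2 + (t : ZMod n) := by rw [hc1def, hc2def]
  have hposR : ∀ j : ℕ, c1 + (j : ZMod n) * (t : ZMod n)
      = (A : ZMod n) - 1 + (((j + 1) * t : ℕ) : ZMod n) := by
    intro j
    rw [hc1def]
    push_cast
    ring
  have hposS : ∀ j : ℕ, c2 + (j : ZMod n) * (-(t : ZMod n))
      = (A : ZMod n) - 1 - ((j * t : ℕ) : ZMod n) := by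
    intro j
    rw [hc2def]
    push_cast
    ring
  have h2pt' : 2 * (p : ZMod n) * (t : ZMod n) = 0 := by
    have h0 := h2pt
    push_cast at h0
    exact h0
  have hposS2 : ∀ j : ℕ, j ≤ 2 * p → (A : ZMod n) - 1 - ((j * t : ℕ) : ZMod n)
      = (A : ZMod n) - 1 + (((2 * p - j) * t : ℕ) : ZMod n) := by
    intro j hj
    have h1 : ((2 * p - j : ℕ) : ZMod n) = 2 * (p : ZMod n) - (j : ZMod n) := by
      rw [Nat.cast_sub hj]
      push_cast
      ring
    push_cast [h1]
    linear_combination -h2pt'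
  -- endpoints
  have hRstart : zvAux n c1 (t : ZMod n) 0 0 = DPVert.u c1 := by
    simp [zvAux]
  have hRend : zvAux n c1 (t : ZMod n) 0 r = DPVert.v ((a i : ZMod n)) := by
    simp only [zvAux]
    rw [if_neg (by have := Nat.odd_iff.mp hrodd; omega)]
    rw [hposR r, hend1]
  have hSstart : zvAux n c2 (-(t : ZMod n)) 1 0 = DPVert.v c2 := by
    simp [zvAux]
  have hSend : zvAux n c2 (-(t : ZMod n)) 1 s
      = DPVert.u ((a i : ZMod n) + (t : ZMod n)) := by
    simp only [zvAux]
    rw [if_pos (by have := Nat.odd_iff.mp hsodd; omega)]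
    rw [hposS s, hend2]
  -- the walks
  set R : (DP n t).Walk (DPVert.u c1) (DPVert.v ((a i : ZMod n))) :=
    (zwalk n t c1 (t : ZMod n) 0 (Or.inl rfl) r).copy hRstart hRend with hRdef
  set S : (DP n t).Walk (DPVert.v c2) (DPVert.u ((a i : ZMod n) + (t : ZMod n))) :=
    (zwalk n t c2 (-(t : ZMod n)) 1 (Or.inr rfl) s).copy hSstart hSend with hSdef
  have hRsup : R.support = (List.range (r + 1)).map (zvAux n c1 (t : ZMod n) 0) := by
    rw [hRdef, SimpleGraph.Walk.support_copy, zwalk_support]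
  have hSsup : S.support = (List.range (s + 1)).map (zvAux n c2 (-(t : ZMod n)) 1) := by
    rw [hSdef, SimpleGraph.Walk.support_copy, zwalk_support]
  have hrb : r + 1 ≤ 2 * p := by omega
  have hsb : s + 1 ≤ 2 * p := by omega
  -- support lists
  have hRlist : R.support = Rlist n t k a i r := by
    rw [hRsup, Rlist]
    refine List.map_congr_left ?_
    intro j _
    rcases Nat.even_or_odd j with hj | hj
    · rw [if_pos hj]
      simp only [zvAux]
      rw [if_pos (by have := Nat.even_iff.mp hj; omega), hposR j]
    · rw [if_neg (Nat.not_even_iff_odd.mpr hj)]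
      simp only [zvAux]
      rw [if_neg (by have := Nat.odd_iff.mp hj; omega), hposR j]
  have hSlist : S.support = Slist n t k a i s := by
    rw [hSsup, Slist]
    refine List.map_congr_left ?_
    intro j _
    rcases Nat.even_or_odd j with hj | hj
    · rw [if_pos hj]
      simp only [zvAux]
      rw [if_neg (by have := Nat.even_iff.mp hj; omega), hposS j]
    · rw [if_neg (Nat.not_even_iff_odd.mpr hj)]
      simp only [zvAux]
      rw [if_pos (by have := Nat.odd_iff.mp hj; omega), hposS j]
  -- paths
  have hkey2 := fun {j j' : ℕ} (hj : j < 2 * p) (hj' : j' < 2 * p)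
      (hpar : j % 2 = j' % 2)
      (heq : ((j * t : ℕ) : ZMod n) = ((j' * t : ℕ) : ZMod n)) =>
    key2 hg0 hp htt hco hn0 hpodd hj hj' hpar heq
  have hRpath : R.IsPath := by
    rw [SimpleGraph.Walk.isPath_def, hRsup]
    refine List.Nodup.map_on ?_ List.nodup_range
    intro x hx y hy hxy
    rw [List.mem_range] at hx hy
    obtain ⟨hpar, hpos⟩ := zvAux_eq hxy
    refine hkey2 (by omega) (by omega) (by omega) ?_
    push_cast
    exact hpos
  have hSpath : S.IsPath := by
    rw [SimpleGraph.Walk.isPath_def, hSsup]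
    refine List.Nodup.map_on ?_ List.nodup_range
    intro x hx y hy hxy
    rw [List.mem_range] at hx hy
    obtain ⟨hpar, hpos⟩ := zvAux_eq hxy
    rw [mul_neg, mul_neg, neg_inj] at hpos
    refine hkey2 (by omega) (by omega) (by omega) ?_
    push_cast
    exact hpos
  -- disjointness
  have hdisj : R.support.Disjoint S.support := by
    rw [hRsup, hSsup]
    intro w hwR hwS
    obtain ⟨x, hx, hxw⟩ := List.mem_map.mp hwR
    obtain ⟨y, hy, hyw⟩ := List.mem_map.mp hwS
    rw [List.mem_range] at hx hy
    have heq : zvAux n c1 (t : ZMod n) 0 x = zvAux n c2 (-(t : ZMod n)) 1 y :=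
      hxw.trans hyw.symm
    simp only [zvAux] at heq
    have hsum : ((x + 1 + y) * t : ℕ) = ((x + 1 + y) * t : ℕ) := rfl
    have hcontra : ∀ hpos : c1 + (x : ZMod n) * (t : ZMod n)
        = c2 + (y : ZMod n) * (-(t : ZMod n)), x % 2 ≠ y % 2 → False := by
      intro hpos hpark
      have h1 : (((x + 1 + y) * t : ℕ) : ZMod n) = ((0 * t : ℕ) : ZMod n) := by
        rw [hc12] at hpos
        push_cast
        linear_combination hpos
      have h2 := hkey2 (by omega) (by omega) (by omega) h1
      omega
    by_cases h1 : (x + 0) % 2 = 0 <;> by_cases h2 : (y + 1) % 2 = 0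
    · rw [if_pos h1, if_pos h2] at heq
      injection heq with heq
      exact hcontra heq (by omega)
    · rw [if_pos h1, if_neg h2] at heq
      exact (nomatch heq)
    · rw [if_neg h1, if_pos h2] at heq
      exact (nomatch heq)
    · rw [if_neg h1, if_neg h2] at heq
      injection heq with heq
      exact hcontra heq (by omega)
  -- value mod lemma
  have hvalmod : ∀ l : ℕ,
      (((A : ZMod n) - 1 + ((l * t : ℕ) : ZMod n)).val) % g = (a i + t) % g := by
    intro l
    have hmodlt : l * t ≡ 0 [MOD g] :=
      (Nat.modEq_zero_iff_dvd).mpr (Dvd.dvd.mul_left ⟨t'', ht''⟩ l)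
    have hNc : ((A + (n - 1) + l * t : ℕ) : ZMod n)
        = (A : ZMod n) - 1 + ((l * t : ℕ) : ZMod n) := by
      push_cast [Nat.cast_sub (show 1 ≤ n by omega)]
      rw [ZMod.natCast_self]
      ring
    rw [← hNc, ZMod.val_natCast, Nat.mod_mod_of_dvd _ hgn]
    have hL : A + n + l * t ≡ i + 1 [MOD g] := by
      simpa using (hModAi.add hModn).add hmodlt
    have hR2 : a i + t + 1 ≡ i + 1 [MOD g] := by
      simpa using (hModai.add hModt).add_right 1
    have e : A + (n - 1) + l * t + 1 = A + n + l * t := by omega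
    have : A + (n - 1) + l * t ≡ a i + t [MOD g] := by
      refine Nat.ModEq.add_right_cancel' 1 ?_
      rw [e]
      exact hL.trans hR2.symm
    exact this
  -- membership helpers
  have hmemR : ∀ j, j < r + 1 → zvAux n c1 (t : ZMod n) 0 j ∈ R.support := by
    intro j hj
    rw [hRsup]
    exact List.mem_map_of_mem (List.mem_range.mpr hj)
  have hmemS : ∀ j, j < s + 1 → zvAux n c2 (-(t : ZMod n)) 1 j ∈ S.support := by
    intro j hj
    rw [hSsup]
    exact List.mem_map_of_mem (List.mem_range.mpr hj)
  -- coverage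
  have hcov : ∀ w : DPVert n,
      (w ∈ R.support ∨ w ∈ S.support) ↔
        ∃ m : ZMod n, (w = DPVert.u m ∨ w = DPVert.v m) ∧
          m.val % g = (a i + t) % g := by
    intro w
    constructor
    · rintro (hw | hw)
      · rw [hRsup] at hw
        obtain ⟨j, hj, rfl⟩ := List.mem_map.mp hw
        rw [List.mem_range] at hj
        refine ⟨c1 + (j : ZMod n) * (t : ZMod n), ?_, ?_⟩
        · simp only [zvAux]
          by_cases hpar : (j + 0) % 2 = 0
          · rw [if_pos hpar]; left; rfl
          · rw [if_neg hpar]; right; rfl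
        · rw [hposR j]
          exact hvalmod (j + 1)
      · rw [hSsup] at hw
        obtain ⟨j, hj, rfl⟩ := List.mem_map.mp hw
        rw [List.mem_range] at hj
        refine ⟨c2 + (j : ZMod n) * (-(t : ZMod n)), ?_, ?_⟩
        · simp only [zvAux]
          by_cases hpar : (j + 1) % 2 = 0
          · rw [if_pos hpar]; left; rfl
          · rw [if_neg hpar]; right; rfl
        · rw [hposS j, hposS2 j (by omega)]
          exact hvalmod (2 * p - j)
    · rintro ⟨x, hw, hval⟩
      -- find base representation
      have hN'A : A ≤ x.val + 1 + n := by omega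
      have hN'cast : ((x.val + 1 + n - A : ℕ) : ZMod n) = x + 1 - (A : ZMod n) := by
        rw [Nat.cast_sub hN'A]
        push_cast
        rw [ZMod.natCast_self, ZMod.natCast_val, ZMod.cast_id]
        ring
      have hN'g : g ∣ x.val + 1 + n - A := by
        have hxv : x.val ≡ a i + t [MOD g] := hval
        have hait : a i + t ≡ i [MOD g] := by simpa using hModai.add hModt
        have h1 : A + (x.val + 1 + n - A) = x.val + 1 + n := by omega
        have h3 : (i + 1) + (x.val + 1 + n - A) ≡ (i + 1) + 0 [MOD g] := by
          calc (i + 1) + (x.val + 1 + n - A)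
              ≡ A + (x.val + 1 + n - A) [MOD g] := hModAi.symm.add_right _
            _ = x.val + 1 + n := h1
            _ ≡ (i + 1) + 0 [MOD g] := by
                simpa using ((hxv.trans hait).add_right 1).add hModn
        exact (Nat.modEq_zero_iff_dvd).mp (Nat.ModEq.add_left_cancel' (i + 1) h3)
      obtain ⟨m1, hm1p, hm1⟩ := solveNT hg0 hp htt hco (by omega) _ hN'g
      have hxpos : x = c2 + ((m1 * t : ℕ) : ZMod n) := by
        rw [hm1, hN'cast, hc2def]
        ring
      have hpt0 : ((p * t : ℕ) : ZMod n) = 0 :=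
        (castMul_eq_zero_iff hg0 hp htt hco hn0 p).mpr (dvd_refl p)
      have hxpos' : x = c2 + (((m1 + p) * t : ℕ) : ZMod n) := by
        rw [show (m1 + p) * t = m1 * t + p * t from by ring, Nat.cast_add, hpt0,
          add_zero]
        exact hxpos
      have locate : ∀ mm : ℕ, mm < 2 * p → x = c2 + ((mm * t : ℕ) : ZMod n) →
          ((mm % 2 = 1 → (DPVert.u x ∈ R.support ∨ DPVert.u x ∈ S.support)) ∧
           (mm % 2 = 0 → (DPVert.v x ∈ R.support ∨ DPVert.v x ∈ S.support))) := by
        intro mm hmm hxm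
        have hRloc : ∀ hc : 1 ≤ mm ∧ mm ≤ M,
            zvAux n c1 (t : ZMod n) 0 (mm - 1) ∈ R.support :=
          fun hc => hmemR _ (by omega)
        have hSloc : ∀ hc : M < mm,
            zvAux n c2 (-(t : ZMod n)) 1 (2 * p - mm) ∈ S.support :=
          fun hc => hmemS _ (by omega)
        have hposR' : ∀ hle : 1 ≤ mm, c1 + ((mm - 1 : ℕ) : ZMod n) * (t : ZMod n) = x := by
          intro hle
          rw [hxm, hc12, Nat.cast_sub hle]
          push_cast
          ring
        have hposS' : c2 + ((2 * p - mm : ℕ) : ZMod n) * (-(t : ZMod n)) = x := by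
          rw [hxm, Nat.cast_sub (by omega)]
          push_cast
          linear_combination -h2pt'
        constructor
        · intro hpar
          by_cases hcase : mm ≤ M
          · left
            have heq : zvAux n c1 (t : ZMod n) 0 (mm - 1) = DPVert.u x := by
              simp only [zvAux]
              rw [if_pos (by omega)]
              rw [hposR' (by omega)]
            rw [← heq]
            exact hRloc ⟨by omega, hcase⟩
          · right
            have heq : zvAux n c2 (-(t : ZMod n)) 1 (2 * p - mm) = DPVert.u x := by
              simp only [zvAux]
              rw [if_pos (by omega)]
              rw [hposS']
            rw [← heq]
            exact hSloc (by omega)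
        · intro hpar
          by_cases h0 : mm = 0
          · right
            have heq : zvAux n c2 (-(t : ZMod n)) 1 0 = DPVert.v x := by
              simp only [zvAux]
              rw [if_neg (by omega)]
              congr 1
              rw [hxm, h0]
              push_cast
              ring
            rw [← heq]
            exact hmemS 0 (by omega)
          · by_cases hcase : mm ≤ M
            · left
              have heq : zvAux n c1 (t : ZMod n) 0 (mm - 1) = DPVert.v x := by
                simp only [zvAux]
                rw [if_neg (by omega)]
                rw [hposR' (by omega)]
              rw [← heq]
              exact hRloc ⟨by omega, hcase⟩
            · right
              have heq : zvAux n c2 (-(t : ZMod n)) 1 (2 * p - mm) = DPVert.v x := by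
                simp only [zvAux]
                rw [if_neg (by omega)]
                rw [hposS']
              rw [← heq]
              exact hSloc (by omega)
      rcases hw with rfl | rfl
      · by_cases hpar : m1 % 2 = 1
        · exact (locate m1 (by omega) hxpos).1 hpar
        · exact (locate (m1 + p) (by omega) hxpos').1 (by omega)
      · by_cases hpar : m1 % 2 = 0
        · exact (locate m1 (by omega) hxpos).2 hpar
        · exact (locate (m1 + p) (by omega) hxpos').2 (by omega)
  exact ⟨r, s, ⟨hrodd, hend1, hsodd, hend2⟩, R, S, hRpath, hSpath, hRlist, hSlist,
    hdisj, hcov⟩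
end

section
/- Let n be odd with gcd(n, t) = 2k+1 and a_0, ..., a_{2k} as in the standard construction. Then the paths R_0, ..., R_{2k}, S_0, ..., S_{2k} (alternating u–v paths of step t starting and ending as specified) together contain every vertex u_m and v_m of DP(n, t), m ∈ ℤ_n, exactly once. -/
lemma castMulCancel (d n' x y : ℕ) (hd : 0 < d) :
    ((d * x : ℕ) : ZMod (d * n')) = ((d * y : ℕ) : ZMod (d * n')) ↔
      ((x : ℕ) : ZMod n') = ((y : ℕ) : ZMod n') := by
  rw [ZMod.natCast_eq_natCast_iff', ZMod.natCast_eq_natCast_iff',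
    Nat.mul_mod_mul_left, Nat.mul_mod_mul_left]
  exact ⟨fun h => Nat.eq_of_mul_eq_mul_left hd h, fun h => by rw [h]⟩

lemma stepInj (n' t' : ℕ) (hodd : Odd n') (hco : Nat.Coprime t' n')
    {p q : ℕ} (hpar : Even p ↔ Even q)
    (h : ((p * t' : ℕ) : ZMod n') = ((q * t' : ℕ) : ZMod n')) :
    p % (2 * n') = q % (2 * n') := by
  have h1 : p ≡ q [MOD n'] :=
    Nat.ModEq.cancel_right_of_coprime (by rwa [Nat.Coprime, Nat.gcd_comm] at hco)
      ((ZMod.natCast_eq_natCast_iff _ _ _).mp h)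
  have h2 : p ≡ q [MOD 2] := by
    show p % 2 = q % 2
    rcases Nat.even_or_odd p with hp | hp
    · rw [Nat.even_iff.mp hp, Nat.even_iff.mp (hpar.mp hp)]
    · have hq : Odd q := Nat.not_even_iff_odd.mp
        (fun h => (Nat.not_even_iff_odd.mpr hp) (hpar.mpr h))
      rw [Nat.odd_iff.mp hp, Nat.odd_iff.mp hq]
  have hco2 : Nat.Coprime 2 n' := Nat.coprime_two_left.mpr hodd
  exact (Nat.modEq_and_modEq_iff_modEq_mul hco2).mp ⟨h2, h1⟩

lemma stepExists (n' t' : ℕ) (h1 : 0 < n') (hodd : Odd n') (hco : Nat.Coprime t' n')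
    (b : Bool) (w : ZMod n') :
    ∃ p < 2 * n', (if b then Even p else Odd p) ∧ ((p * t' : ℕ) : ZMod n') = w := by
  haveI : NeZero n' := ⟨h1.ne'⟩
  have hcard : Fintype.card (Fin (2 * n')) = Fintype.card (Bool × ZMod n') := by
    simp [ZMod.card, Nat.two_mul, two_mul]
  let f : Fin (2 * n') → Bool × ZMod n' :=
    fun p => (decide (Even p.val), ((p.val * t' : ℕ) : ZMod n'))
  have hinj : Function.Injective f := by
    intro p q hpq
    have h1' := congrArg Prod.fst hpq
    have h2' := congrArg Prod.snd hpq
    simp only [f, decide_eq_decide] at h1' h2'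
    have := stepInj n' t' hodd hco h1' h2'
    exact Fin.ext (by rwa [Nat.mod_eq_of_lt p.isLt, Nat.mod_eq_of_lt q.isLt] at this)
  have hsurj : Function.Surjective f :=
    ((Fintype.bijective_iff_injective_and_card f).mpr ⟨hinj, hcard⟩).2
  obtain ⟨p, hp⟩ := hsurj (b, w)
  refine ⟨p.val, p.isLt, ?_, congrArg Prod.snd hp⟩
  have := congrArg Prod.fst hp
  simp only [f, decide_eq_true_eq] at this ⊢
  cases b
  · simp only [if_neg (Bool.false_ne_true)]
    exact Nat.not_even_iff_odd.mp (by simpa using this)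
  · simpa using this
def Fv (n t : ℕ) (c : ZMod n) (p : ℕ) : DPVert n :=
  if Even p then DPVert.v (c + ((p * t : ℕ) : ZMod n))
  else DPVert.u (c + ((p * t : ℕ) : ZMod n))

lemma flatMapPermCongr {α β : Type*} {f g : α → List β} :
    ∀ (l : List α), (∀ x ∈ l, (f x).Perm (g x)) → (l.flatMap f).Perm (l.flatMap g)
  | [], _ => by simp
  | x :: l, h => by
    simp only [List.flatMap_cons]
    exact (h x (by simp)).append (flatMapPermCongr l fun y hy => h y (by simp [hy]))

lemma eqOfModInterval (N p q : ℕ) (h : p % N = q % N) (hp1 : 1 ≤ p) (hp2 : p ≤ N)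
    (hq1 : 1 ≤ q) (hq2 : q ≤ N) : p = q := by
  rcases eq_or_lt_of_le hp2 with rfl | hp
  · rcases eq_or_lt_of_le hq2 with rfl | hq
    · rfl
    · rw [Nat.mod_self, Nat.mod_eq_of_lt hq] at h; omega
  · rcases eq_or_lt_of_le hq2 with rfl | hq
    · rw [Nat.mod_self, Nat.mod_eq_of_lt hp] at h; omega
    · rw [Nat.mod_eq_of_lt hp, Nat.mod_eq_of_lt hq] at h; exact h

lemma indexPerm (n' r s : ℕ) (hsum : r + 1 + (s + 1) = 2 * n') :
    ((List.range (r + 1)).map (· + 1) ++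
        (List.range (s + 1)).map (fun j => 2 * n' - j)).Perm
      ((List.range (2 * n')).map (· + 1)) := by
  refine (List.perm_ext_iff_of_nodup ?_ ?_).mpr ?_
  · rw [List.nodup_append]
    refine ⟨List.Nodup.map (fun x y h => by omega) List.nodup_range,
      List.Nodup.map_on (fun x hx y hy h => by
        rw [List.mem_range] at hx hy; omega) List.nodup_range, ?_⟩
    intro x hx y hy
    simp only [List.mem_map, List.mem_range] at hx hy
    obtain ⟨j, hj, rfl⟩ := hx
    obtain ⟨j', hj', he⟩ := hy
    omega
  · exact List.Nodup.map (fun x y h => by omega) List.nodup_range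
  · intro x
    simp only [List.mem_append, List.mem_map, List.mem_range]
    constructor
    · rintro (⟨j, hj, rfl⟩ | ⟨j, hj, rfl⟩)
      · exact ⟨j, by omega, rfl⟩
      · exact ⟨2 * n' - j - 1, by omega, by omega⟩
    · rintro ⟨p, hp, rfl⟩
      by_cases hc : p < r + 1
      · exact Or.inl ⟨p, hc, rfl⟩
      · exact Or.inr ⟨2 * n' - (p + 1), by omega, by omega⟩

lemma rlistEq (n t k : ℕ) (a : ℕ → ℕ) (i r : ℕ) :
    Rlist n t k a i r = (List.range (r + 1)).map
      (fun j => Fv n t ((a ((i + 1) % (2 * k + 1)) : ZMod n) - 1) (j + 1)) := by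
  unfold Rlist
  apply List.map_congr_left
  intro j _
  simp only [Fv]
  rcases Nat.even_or_odd j with hj | hj
  · rw [if_pos hj, if_neg (by simpa [Nat.even_add_one] using hj)]
  · rw [if_neg (Nat.not_even_iff_odd.mpr hj),
      if_pos (Nat.even_add_one.mpr (Nat.not_even_iff_odd.mpr hj))]

lemma slistEq (n t k n' : ℕ) (a : ℕ → ℕ) (i s : ℕ) (hs : s < 2 * n')
    (h0 : ((2 * n' * t : ℕ) : ZMod n) = 0) :
    Slist n t k a i s = (List.range (s + 1)).map
      (fun j => Fv n t ((a ((i + 1) % (2 * k + 1)) : ZMod n) - 1) (2 * n' - j)) := by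
  unfold Slist
  apply List.map_congr_left
  intro j hj
  rw [List.mem_range] at hj
  have hneg : (((2 * n' - j) * t : ℕ) : ZMod n) = -((j * t : ℕ) : ZMod n) := by
    have hadd : (2 * n' - j) * t + j * t = 2 * n' * t := by
      rw [← Nat.add_mul]; congr 1; omega
    have h2 : (((2 * n' - j) * t : ℕ) : ZMod n) + ((j * t : ℕ) : ZMod n) = 0 := by
      rw [← Nat.cast_add, hadd, h0]
    linear_combination h2
  have hpar : Even (2 * n' - j) ↔ Even j := by
    rw [Nat.even_sub (by omega)]
    simp
  simp only [Fv]
  rcases Nat.even_or_odd j with h | h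
  · rw [if_pos h, if_pos (hpar.mpr h), hneg, ← sub_eq_add_neg]
  · rw [if_neg (Nat.not_even_iff_odd.mpr h),
      if_neg (fun hc => (Nat.not_even_iff_odd.mpr h) (hpar.mp hc)), hneg, ← sub_eq_add_neg]
lemma FvAux (n t : ℕ) (c c' : ZMod n) (p q : ℕ) (h : Fv n t c p = Fv n t c' q) :
    (Even p ↔ Even q) ∧ c + ((p * t : ℕ) : ZMod n) = c' + ((q * t : ℕ) : ZMod n) := by
  unfold Fv at h
  by_cases hp : Even p <;> by_cases hq : Even q <;> simp [hp, hq] at h <;>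
    exact ⟨by tauto, by push_cast; exact h⟩
theorem R_S_paths_cover_inner (n t k : ℕ) (hn : 3 ≤ n) (ht : 2 ≤ 2 * t) (htn : 2 * t < n)
    (hodd : Odd n) (hgcd : Nat.gcd n t = 2 * k + 1)
    (a : ℕ → ℕ) (ha : GoodSeq n k a) :
    ∃ r s : ℕ → ℕ, (∀ i < 2 * k + 1, RSEnds n t k a i (r i) (s i)) ∧
      ((List.range (2 * k + 1)).flatMap
        (fun i => Rlist n t k a i (r i) ++ Slist n t k a i (s i))).Nodup ∧
      ∀ w : DPVert n,
        ((∃ m, w = DPVert.u m) ∨ (∃ m, w = DPVert.v m)) ↔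
          w ∈ (List.range (2 * k + 1)).flatMap
            (fun i => Rlist n t k a i (r i) ++ Slist n t k a i (s i)) := by
  classical
  haveI : NeZero n := ⟨by omega⟩
  obtain ⟨h1, h2, h3, h4⟩ := ha
  have hd0 : 0 < 2 * k + 1 := by omega
  have hdn : (2 * k + 1) ∣ n := hgcd ▸ Nat.gcd_dvd_left n t
  have hdt : (2 * k + 1) ∣ t := hgcd ▸ Nat.gcd_dvd_right n t
  obtain ⟨n', hnn⟩ := hdn
  obtain ⟨t', htt⟩ := hdt
  have hdn : (2 * k + 1) ∣ n := ⟨n', hnn⟩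
  have hdt : (2 * k + 1) ∣ t := ⟨t', htt⟩
  have hn'pos : 0 < n' := by
    rcases Nat.eq_zero_or_pos n' with h | h
    · rw [h, mul_zero] at hnn; omega
    · exact h
  have hn'odd : Odd n' := (Nat.odd_mul.mp (hnn ▸ hodd)).2
  have hco : Nat.Coprime t' n' := by
    have h := Nat.coprime_div_gcd_div_gcd (m := n) (n := t) (by rw [hgcd]; omega)
    rw [hgcd, hnn, htt, Nat.mul_div_cancel_left _ hd0, Nat.mul_div_cancel_left _ hd0] at h
    exact h.symm
  have h2nt0 : ((2 * n' * t : ℕ) : ZMod n) = 0 := by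
    rw [show 2 * n' * t = n * (2 * t') by rw [htt, hnn]; ring]
    push_cast
    simp [ZMod.natCast_self]
  -- monotonicity of the even- and odd-indexed subsequences
  have evenMono : ∀ j', j' ≤ k → ∀ j, j ≤ j' → a (2 * j) ≤ a (2 * j') := by
    intro j'
    induction j' with
    | zero => intro _ j hj; interval_cases j; exact le_refl _
    | succ m ih =>
      intro hm j hj
      rcases Nat.eq_or_lt_of_le hj with rfl | hlt
      · exact le_refl _
      · have ha1 : a (2 * j) ≤ a (2 * m) := ih (by omega) j (by omega)
        have ha2 := h2 m (by omega)
        rw [show 2 * (m + 1) = 2 * m + 2 by ring]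
        omega
  have oddMono : ∀ j', j' + 1 ≤ k → ∀ j, j ≤ j' → a (2 * j + 1) ≤ a (2 * j' + 1) := by
    intro j'
    induction j' with
    | zero => intro _ j hj; interval_cases j; exact le_refl _
    | succ m ih =>
      intro hm j hj
      rcases Nat.eq_or_lt_of_le hj with rfl | hlt
      · exact le_refl _
      · have ha1 : a (2 * j + 1) ≤ a (2 * m + 1) := ih (by omega) j (by omega)
        have ha2 := h4 m (by omega)
        rw [show 2 * (m + 1) + 1 = 2 * m + 3 by ring]
        omega
  -- the key combinatorial exclusion
  have core : ∀ i < 2 * k + 1, a i + 1 ≠ a ((i + 1) % (2 * k + 1)) ∧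
      a i + 1 ≠ a ((i + 1) % (2 * k + 1)) + n := by
    intro i hi
    by_cases hik : i = 2 * k
    · subst hik
      rw [show (2 * k + 1) % (2 * k + 1) = 0 from Nat.mod_self _]
      rcases Nat.eq_zero_or_pos k with rfl | hk
      · simp only [Nat.mul_zero]
        constructor <;> omega
      · have hlt : a 0 < a (2 * k) := by
          have hm1 : a (2 * 0) ≤ a (2 * (k - 1)) := evenMono (k - 1) (by omega) 0 (by omega)
          have hm2 := h2 (k - 1) (by omega)
          rw [show 2 * (k - 1) + 2 = 2 * k by omega] at hm2
          simpa using lt_of_le_of_lt hm1 hm2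
        have hub : a (2 * k) < a 1 := h3 hk
        have ha1n := (h1 1 (by omega)).1
        constructor <;> omega
    · rw [Nat.mod_eq_of_lt (by omega)]
      rcases Nat.even_or_odd i with ⟨j, hj⟩ | ⟨j, hj⟩
      · -- i = 2 j, j < k
        have hjk : j < k := by omega
        have hij : i = 2 * j := by omega
        subst hij
        have c1 : a (2 * j) < a (2 * j + 2) := h2 j hjk
        have c2 : a (2 * j + 2) ≤ a (2 * k) := by
          have := evenMono k (le_refl k) (j + 1) (by omega)
          rwa [show 2 * (j + 1) = 2 * j + 2 by ring] at this
        have c3 : a (2 * k) < a 1 := h3 (by omega)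
        have c4 : a 1 ≤ a (2 * j + 1) := by
          have := oddMono j (by omega) 0 (by omega)
          rwa [show 2 * 0 + 1 = 1 by ring] at this
        have hbound := (h1 (2 * j) (by omega)).1
        constructor <;> omega
      · -- i = 2 j + 1 < 2 k
        have hij : i = 2 * j + 1 := by omega
        have hjk : j + 1 ≤ k := by omega
        subst hij
        have c2 : a (2 * j + 2) ≤ a (2 * k) := by
          have := evenMono k (le_refl k) (j + 1) (by omega)
          rwa [show 2 * (j + 1) = 2 * j + 2 by ring] at this
        have c3 : a (2 * k) < a 1 := h3 (by omega)
        have c4 : a 1 ≤ a (2 * j + 1) := by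
          have := oddMono j hjk 0 (by omega)
          rwa [show 2 * 0 + 1 = 1 by ring] at this
        have hbound := (h1 (2 * j + 1) (by omega)).1
        rw [show 2 * j + 1 + 1 = 2 * j + 2 by ring]
        have hne0 : a (2 * j + 2) ≠ 0 := by
          intro h0
          have hm := (h1 (2 * j + 2) (by omega)).2
          rw [h0, Nat.zero_mod, Nat.mod_eq_of_lt (by omega : 2 * j + 2 < 2 * k + 1)] at hm
          omega
        constructor <;> omega
  -- residues of the a-sequence
  have hmod : ∀ i < 2 * k + 1,
      a ((i + 1) % (2 * k + 1)) % (2 * k + 1) = (i + 1) % (2 * k + 1) := by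
    intro i hi
    have hlt : (i + 1) % (2 * k + 1) ≤ 2 * k := by
      have := Nat.mod_lt (i + 1) hd0; omega
    rw [(h1 _ hlt).2, Nat.mod_mod_of_dvd _ dvd_rfl]
  -- main per-index existence of path lengths
  have main : ∀ i, ∃ pr ps : ℕ, i < 2 * k + 1 → (Even pr ∧ Even ps ∧ 2 ≤ pr ∧ 2 ≤ ps ∧
      pr < 2 * n' ∧ ps < 2 * n' ∧ pr + ps = 2 * n' ∧
      ((pr * t : ℕ) : ZMod n) = (a i : ZMod n) + 1 - (a ((i + 1) % (2 * k + 1)) : ZMod n) ∧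
      ((ps * t : ℕ) : ZMod n) = (a ((i + 1) % (2 * k + 1)) : ZMod n) - 1 - (a i : ZMod n)) := by
    intro i
    by_cases hi : i < 2 * k + 1
    swap
    · exact ⟨0, 0, fun h => absurd h hi⟩
    have hi1 : (i + 1) % (2 * k + 1) ≤ 2 * k := by
      have := Nat.mod_lt (i + 1) hd0; omega
    have hA := h1 i (by omega)
    have hBlt := (h1 _ hi1).1
    have hBd := hmod i hi
    have hcore := core i hi
    -- the R-target
    have hler : a ((i + 1) % (2 * k + 1)) ≤ a i + 1 + n := by omega
    have hdr : (2 * k + 1) ∣ (a i + 1 + n - a ((i + 1) % (2 * k + 1))) := by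
      apply (Nat.modEq_iff_dvd' hler).mp
      show a ((i + 1) % (2 * k + 1)) % (2 * k + 1) = (a i + 1 + n) % (2 * k + 1)
      have e1 : a i + 1 + n ≡ i + 1 [MOD 2 * k + 1] := by
        have hna : n ≡ 0 [MOD 2 * k + 1] := (Nat.modEq_zero_iff_dvd).mpr hdn
        have hia : a i ≡ i [MOD 2 * k + 1] := hA.2
        simpa using (Nat.ModEq.add_right 1 hia).add hna
      have e2 : (a i + 1 + n) % (2 * k + 1) = (i + 1) % (2 * k + 1) := e1
      rw [hBd, e2]
    obtain ⟨wr, hwr⟩ := hdr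
    obtain ⟨pr, hprlt, hpre, hprz⟩ :=
      stepExists n' t' hn'pos hn'odd hco true ((wr : ℕ) : ZMod n')
    rw [if_pos rfl] at hpre
    have hprt : ((pr * t : ℕ) : ZMod n) =
        ((a i + 1 + n - a ((i + 1) % (2 * k + 1)) : ℕ) : ZMod n) := by
      rw [hwr, htt, hnn, show pr * ((2 * k + 1) * t') = (2 * k + 1) * (pr * t') by ring]
      exact (castMulCancel (2 * k + 1) n' _ _ hd0).mpr hprz
    have hprne : pr ≠ 0 := by
      intro h0
      rw [h0, zero_mul, Nat.cast_zero] at hprt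
      obtain ⟨c, hc⟩ := (ZMod.natCast_eq_zero_iff _ _).mp hprt.symm
      have hub : n * c ≤ n * 2 := by omega
      have hc2 : c ≤ 2 := Nat.le_of_mul_le_mul_left hub (by omega)
      interval_cases c <;> omega
    -- the S-target
    have hles : a i + 1 ≤ a ((i + 1) % (2 * k + 1)) + n := by omega
    have hds : (2 * k + 1) ∣ (a ((i + 1) % (2 * k + 1)) + n - (a i + 1)) := by
      apply (Nat.modEq_iff_dvd' hles).mp
      show (a i + 1) % (2 * k + 1) = (a ((i + 1) % (2 * k + 1)) + n) % (2 * k + 1)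
      have e1 : a i + 1 ≡ i + 1 [MOD 2 * k + 1] := Nat.ModEq.add_right 1 hA.2
      have e2 : a ((i + 1) % (2 * k + 1)) + n ≡ i + 1 [MOD 2 * k + 1] := by
        have hna : n ≡ 0 [MOD 2 * k + 1] := (Nat.modEq_zero_iff_dvd).mpr hdn
        have hb : a ((i + 1) % (2 * k + 1)) ≡ i + 1 [MOD 2 * k + 1] := by
          show a ((i + 1) % (2 * k + 1)) % (2 * k + 1) = (i + 1) % (2 * k + 1)
          exact hBd
        simpa using hb.add hna
      have e1' : (a i + 1) % (2 * k + 1) = (i + 1) % (2 * k + 1) := e1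
      have e2' : (a ((i + 1) % (2 * k + 1)) + n) % (2 * k + 1) = (i + 1) % (2 * k + 1) := e2
      rw [e1', e2']
    obtain ⟨ws, hws⟩ := hds
    obtain ⟨ps, hpslt, hpse, hpsz⟩ :=
      stepExists n' t' hn'pos hn'odd hco true ((ws : ℕ) : ZMod n')
    rw [if_pos rfl] at hpse
    have hpst : ((ps * t : ℕ) : ZMod n) =
        ((a ((i + 1) % (2 * k + 1)) + n - (a i + 1) : ℕ) : ZMod n) := by
      rw [hws, htt, hnn, show ps * ((2 * k + 1) * t') = (2 * k + 1) * (ps * t') by ring]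
      exact (castMulCancel (2 * k + 1) n' _ _ hd0).mpr hpsz
    have hpsne : ps ≠ 0 := by
      intro h0
      rw [h0, zero_mul, Nat.cast_zero] at hpst
      obtain ⟨c, hc⟩ := (ZMod.natCast_eq_zero_iff _ _).mp hpst.symm
      have hub : n * c ≤ n * 2 := by omega
      have hc2 : c ≤ 2 := Nat.le_of_mul_le_mul_left hub (by omega)
      interval_cases c <;> omega
    have hpr2 : 2 ≤ pr := by
      obtain ⟨c, hc⟩ := hpre; omega
    have hps2 : 2 ≤ ps := by
      obtain ⟨c, hc⟩ := hpse; omega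
    -- the two lengths are complementary
    have hsum : pr + ps = 2 * n' := by
      have hms : (a i + 1 + n - a ((i + 1) % (2 * k + 1))) +
          (a ((i + 1) % (2 * k + 1)) + n - (a i + 1)) = 2 * n := by omega
      have hz : (((pr + ps) * t : ℕ) : ZMod n) = 0 := by
        rw [add_mul, Nat.cast_add, hprt, hpst, ← Nat.cast_add, hms,
          show 2 * n = n * 2 by ring]
        push_cast
        simp [ZMod.natCast_self]
      obtain ⟨c, hc⟩ := (ZMod.natCast_eq_zero_iff _ _).mp hz
      have h2' : n' ∣ (pr + ps) * t' := by
        refine ⟨c, Nat.eq_of_mul_eq_mul_left hd0 ?_⟩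
        calc (2 * k + 1) * ((pr + ps) * t') = (pr + ps) * ((2 * k + 1) * t') := by ring
          _ = n * c := by rw [← htt, hc]
          _ = (2 * k + 1) * (n' * c) := by rw [hnn]; ring
      have h3' : n' ∣ pr + ps := Nat.Coprime.dvd_of_dvd_mul_right hco.symm h2'
      have h4' : 2 ∣ pr + ps := (hpre.add hpse).two_dvd
      have h5' : 2 * n' ∣ pr + ps :=
        Nat.Coprime.mul_dvd_of_dvd_of_dvd (Nat.coprime_two_left.mpr hn'odd) h4' h3'
      obtain ⟨c', hc'⟩ := h5'
      have hcl : c' < 2 := by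
        refine Nat.lt_of_mul_lt_mul_left (a := 2 * n') ?_
        omega
      have hcp : c' ≠ 0 := by
        intro h0; rw [h0, mul_zero] at hc'; omega
      have : c' = 1 := by omega
      rw [this, mul_one] at hc'
      omega
    refine ⟨pr, ps, fun _ => ⟨hpre, hpse, hpr2, hps2, by omega, by omega, hsum, ?_, ?_⟩⟩
    · rw [hprt, Nat.cast_sub hler]
      push_cast
      simp only [ZMod.natCast_self]
      ring
    · rw [hpst, Nat.cast_sub hles]
      push_cast
      simp only [ZMod.natCast_self]
      ring
  choose pr ps hmain using main
  -- each path pair is a permutation of a canonical cycle list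
  have hpermEach : ∀ i ∈ List.range (2 * k + 1),
      (Rlist n t k a i (pr i - 1) ++ Slist n t k a i (ps i - 1)).Perm
        ((List.range (2 * n')).map
          (fun p => Fv n t ((a ((i + 1) % (2 * k + 1)) : ZMod n) - 1) (p + 1))) := by
    intro i hi
    rw [List.mem_range] at hi
    obtain ⟨hepr, heps, hpr2, hps2, hprlt, hpslt, hsum, -, -⟩ := hmain i hi
    rw [rlistEq n t k a i (pr i - 1), slistEq n t k n' a i (ps i - 1) (by omega) h2nt0]
    have hip := (indexPerm n' (pr i - 1) (ps i - 1) (by omega)).map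
      (Fv n t ((a ((i + 1) % (2 * k + 1)) : ZMod n) - 1))
    rw [List.map_append] at hip
    simp only [List.map_map] at hip
    exact hip
  have hperm := flatMapPermCongr
    (f := fun i => Rlist n t k a i (pr i - 1) ++ Slist n t k a i (ps i - 1))
    (g := fun i => (List.range (2 * n')).map
      (fun p => Fv n t ((a ((i + 1) % (2 * k + 1)) : ZMod n) - 1) (p + 1)))
    (List.range (2 * k + 1)) hpermEach
  -- injectivity of Fv on [1, 2n']
  have hFvInj : ∀ (c : ZMod n) (p q : ℕ), 1 ≤ p → p ≤ 2 * n' → 1 ≤ q → q ≤ 2 * n' →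
      Fv n t c p = Fv n t c q → p = q := by
    intro c p q hp1 hp2 hq1 hq2 h
    obtain ⟨hpar, hidx⟩ := FvAux n t c c p q h
    have hidx' : ((p * t : ℕ) : ZMod n) = ((q * t : ℕ) : ZMod n) := add_left_cancel hidx
    rw [htt, hnn, show p * ((2 * k + 1) * t') = (2 * k + 1) * (p * t') by ring,
      show q * ((2 * k + 1) * t') = (2 * k + 1) * (q * t') by ring] at hidx'
    have hcn := (castMulCancel (2 * k + 1) n' _ _ hd0).mp hidx'
    exact eqOfModInterval (2 * n') p q (stepInj n' t' hn'odd hco hpar hcn) hp1 hp2 hq1 hq2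
  -- the canonical list has no duplicates
  have hnodupLc : ((List.range (2 * k + 1)).flatMap
      (fun i => (List.range (2 * n')).map
        (fun p => Fv n t ((a ((i + 1) % (2 * k + 1)) : ZMod n) - 1) (p + 1)))).Nodup := by
    rw [List.nodup_flatMap]
    constructor
    · intro i hi
      refine List.Nodup.map_on ?_ List.nodup_range
      intro p hp q hq h
      rw [List.mem_range] at hp hq
      have := hFvInj _ (p + 1) (q + 1) (by omega) (by omega) (by omega) (by omega) h
      omega
    · refine List.nodup_range.pairwise_of_forall_ne ?_
      intro i hi i' hi' hne
      rw [List.mem_range] at hi hi'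
      intro w hw hw'
      simp only [List.mem_map, List.mem_range] at hw hw'
      obtain ⟨p, hp, hFp⟩ := hw
      obtain ⟨q, hq, hFq⟩ := hw'
      obtain ⟨-, hidx⟩ := FvAux n t _ _ _ _ (hFp.trans hFq.symm)
      have hcast := congrArg (ZMod.castHom hdn (ZMod (2 * k + 1))) hidx
      have ht0 : ((t : ℕ) : ZMod (2 * k + 1)) = 0 :=
        (ZMod.natCast_eq_zero_iff _ _).mpr hdt
      simp only [map_add, map_sub, map_one, map_natCast] at hcast
      rw [Nat.cast_mul, Nat.cast_mul, ht0, mul_zero, mul_zero] at hcast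
      have hba : ((a ((i + 1) % (2 * k + 1)) : ℕ) : ZMod (2 * k + 1)) =
          ((a ((i' + 1) % (2 * k + 1)) : ℕ) : ZMod (2 * k + 1)) := by
        linear_combination hcast
      rw [ZMod.natCast_eq_natCast_iff'] at hba
      rw [hmod i hi, hmod i' hi'] at hba
      have := eqOfModInterval (2 * k + 1) (i + 1) (i' + 1) hba (by omega) (by omega)
        (by omega) (by omega)
      omega
  -- the canonical list covers all inner vertices
  have hfind : ∀ (m : ZMod n) (par : Bool), ∃ i, i < 2 * k + 1 ∧ ∃ p0, 1 ≤ p0 ∧ p0 ≤ 2 * n' ∧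
      (if par then Even p0 else Odd p0) ∧
      ((a ((i + 1) % (2 * k + 1)) : ZMod n) - 1 + ((p0 * t : ℕ) : ZMod n)) = m := by
    intro m par
    refine ⟨m.val % (2 * k + 1), Nat.mod_lt _ hd0, ?_⟩
    set i := m.val % (2 * k + 1) with hidef
    have hi : i < 2 * k + 1 := Nat.mod_lt _ hd0
    have hi1 : (i + 1) % (2 * k + 1) ≤ 2 * k := by
      have := Nat.mod_lt (i + 1) hd0; omega
    have hBlt := (h1 _ hi1).1
    have hBd := hmod i hi
    have hmv : m.val < n := ZMod.val_lt m
    have hle : a ((i + 1) % (2 * k + 1)) ≤ m.val + 1 + n := by omega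
    have hdvd : (2 * k + 1) ∣ (m.val + 1 + n - a ((i + 1) % (2 * k + 1))) := by
      apply (Nat.modEq_iff_dvd' hle).mp
      show a ((i + 1) % (2 * k + 1)) % (2 * k + 1) = (m.val + 1 + n) % (2 * k + 1)
      have e1 : m.val + 1 + n ≡ i + 1 [MOD 2 * k + 1] := by
        have hna : n ≡ 0 [MOD 2 * k + 1] := (Nat.modEq_zero_iff_dvd).mpr hdn
        have him : m.val ≡ i [MOD 2 * k + 1] := by
          show m.val % (2 * k + 1) = i % (2 * k + 1)
          rw [hidef, Nat.mod_mod_of_dvd _ dvd_rfl]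
        simpa using (Nat.ModEq.add_right 1 him).add hna
      have e1' : (m.val + 1 + n) % (2 * k + 1) = (i + 1) % (2 * k + 1) := e1
      rw [hBd, e1']
    obtain ⟨w0, hw0⟩ := hdvd
    obtain ⟨q0, hq0lt, hq0par, hq0z⟩ :=
      stepExists n' t' hn'pos hn'odd hco par ((w0 : ℕ) : ZMod n')
    have hq0t : ((q0 * t : ℕ) : ZMod n) =
        ((m.val + 1 + n - a ((i + 1) % (2 * k + 1)) : ℕ) : ZMod n) := by
      rw [hw0, htt, hnn, show q0 * ((2 * k + 1) * t') = (2 * k + 1) * (q0 * t') by ring]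
      exact (castMulCancel (2 * k + 1) n' _ _ hd0).mpr hq0z
    have hMcast : ((m.val + 1 + n - a ((i + 1) % (2 * k + 1)) : ℕ) : ZMod n) =
        m + 1 - (a ((i + 1) % (2 * k + 1)) : ZMod n) := by
      rw [Nat.cast_sub hle]
      push_cast
      rw [ZMod.natCast_val, ZMod.cast_id, ZMod.natCast_self]
      ring
    by_cases hq00 : q0 = 0
    · refine ⟨2 * n', by omega, le_refl _, ?_, ?_⟩
      · subst hq00
        cases par
        · exfalso
          have : Odd 0 := by simpa using hq0par
          have := Nat.odd_iff.mp this
          omega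
        · simp only [if_pos]
          exact ⟨n', by ring⟩
      · rw [h2nt0]
        rw [hq00, zero_mul, Nat.cast_zero, hMcast] at hq0t
        linear_combination hq0t
    · refine ⟨q0, by omega, by omega, hq0par, ?_⟩
      rw [hq0t, hMcast]
      ring
  have hcovLc : ∀ w : DPVert n,
      ((∃ m, w = DPVert.u m) ∨ (∃ m, w = DPVert.v m)) ↔
        w ∈ (List.range (2 * k + 1)).flatMap
          (fun i => (List.range (2 * n')).map
            (fun p => Fv n t ((a ((i + 1) % (2 * k + 1)) : ZMod n) - 1) (p + 1))) := by
    intro w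
    constructor
    · rintro (⟨m, rfl⟩ | ⟨m, rfl⟩)
      · obtain ⟨i, hi, p0, hp01, hp02, hpar, heq⟩ := hfind m false
        simp only [List.mem_flatMap, List.mem_map, List.mem_range]
        refine ⟨i, hi, p0 - 1, by omega, ?_⟩
        rw [show p0 - 1 + 1 = p0 by omega]
        unfold Fv
        have hodd0 : Odd p0 := by simpa using hpar
        rw [if_neg (Nat.not_even_iff_odd.mpr hodd0), heq]
      · obtain ⟨i, hi, p0, hp01, hp02, hpar, heq⟩ := hfind m true
        simp only [List.mem_flatMap, List.mem_map, List.mem_range]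
        refine ⟨i, hi, p0 - 1, by omega, ?_⟩
        rw [show p0 - 1 + 1 = p0 by omega]
        unfold Fv
        have hev0 : Even p0 := by simpa using hpar
        rw [if_pos hev0, heq]
    · intro hw
      simp only [List.mem_flatMap, List.mem_map, List.mem_range] at hw
      obtain ⟨i, hi, p, hp, rfl⟩ := hw
      unfold Fv
      split
      · exact Or.inr ⟨_, rfl⟩
      · exact Or.inl ⟨_, rfl⟩
  refine ⟨fun i => pr i - 1, fun i => ps i - 1, ?_, ?_, ?_⟩
  · intro i hi
    show RSEnds n t k a i (pr i - 1) (ps i - 1)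
    obtain ⟨hepr, heps, hpr2, hps2, hprlt, hpslt, hsum, hprt, hpst⟩ := hmain i hi
    unfold RSEnds
    refine ⟨?_, ?_, ?_, ?_⟩
    · obtain ⟨c, hc⟩ := hepr; exact ⟨c - 1, by omega⟩
    · rw [show pr i - 1 + 1 = pr i by omega, hprt]; ring
    · obtain ⟨c, hc⟩ := heps; exact ⟨c - 1, by omega⟩
    · rw [show (ps i - 1) * t = ps i * t - 1 * t from Nat.sub_mul _ _ _, one_mul,
        Nat.cast_sub (Nat.le_mul_of_pos_left t (by omega)), hpst]
      ring
  · exact hperm.nodup_iff.mpr hnodupLc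
  · intro w
    rw [hperm.mem_iff]
    exact hcovLc w
end
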